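/- arXiv:1910.03531 — 4 statements merged into one kernel-verified Lean document; each statement's English description precedes it below -/
import Mathlib

section
/- Assume (A1) and (A2), and fix t ∈ {0,1}. Let τ†₁ : 𝒳 → ℝ be an arbitrary bounded measurable function, let π† : 𝒳 → [ε, 1−ε] be measurable and τ†₀ : 𝒳 → ℝ be bounded measurable, and suppose that either (i) π†(X) = π_t(0,X) almost surely, or (ii) τ†₀(X) = τ_t(0,X) almost surely. Define π̃(R,X) = R·π_{t1} + (1−R)·π†(X) and τ̃(R,X) = R·τ†₁(X) + (1−R)·τ†₀(X). Then the influence-function expression evaluated at these (possibly misspecified) nuisances remains unbiased: E[ 1{T=t}·Y / π̃(R,X) + (1 − 1{T=t} / π̃(R,X))·τ̃(R,X) ] = μ_t. -/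
open MeasureTheory ProbabilityTheory Set
open scoped NNReal ENNReal

noncomputable section

/-- The σ-algebra on `Ω` generated by the map `X`. -/
def sigmaX {Ω 𝒳 : Type*} [MeasurableSpace 𝒳] (X : Ω → 𝒳) : MeasurableSpace Ω :=
  MeasurableSpace.comap X inferInstance

/-- Conditional expectation of `f` given the σ-algebra `m'` under the measure `μ`. -/
def cexp {Ω : Type*} (m' : MeasurableSpace Ω) {m0 : MeasurableSpace Ω} (μ : Measure Ω)
    (f : Ω → ℝ) : Ω → ℝ :=
  MeasureTheory.condExp m' μ f

/-- Conditional probability of the event `s` given the σ-algebra `m'`, as a function. -/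
def cprob {Ω : Type*} (m' : MeasurableSpace Ω) {m0 : MeasurableSpace Ω} (μ : Measure Ω)
    (s : Set Ω) : Ω → ℝ :=
  cexp m' μ (s.indicator fun _ => (1 : ℝ))

/-- `f` and `g` are conditionally independent given the σ-algebra `m'` under `μ` :
conditional probabilities of joint events factorize. -/
def CondIndepFunGiven {Ω β γ : Type*} [MeasurableSpace β]
    [MeasurableSpace γ] (m' : MeasurableSpace Ω) {m0 : MeasurableSpace Ω}
    (f : Ω → β) (g : Ω → γ) (μ : Measure Ω) : Prop :=
  ∀ s u, MeasurableSet s → MeasurableSet u →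
    cprob m' μ (f ⁻¹' s ∩ g ⁻¹' u)
      =ᵐ[μ] fun ω => cprob m' μ (f ⁻¹' s) ω * cprob m' μ (g ⁻¹' u) ω




lemma condexp_indicator_mul_comp {Ω β : Type*} {m' : MeasurableSpace Ω}
    [m0 : MeasurableSpace Ω] [mβ : MeasurableSpace β] (hm' : m' ≤ m0)
    (μ : Measure Ω) [IsProbabilityMeasure μ]
    {T : Ω → ℝ} {g : Ω → β} (hT : Measurable T) (hg : Measurable g)
    (hind : CondIndepFunGiven m' T g μ) (t : ℝ)
    {f : β → ℝ} (hf : Measurable f) (hfint : Integrable (fun ω => f (g ω)) μ) :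
    condExp m' μ (fun ω => (T ⁻¹' {t}).indicator (fun _ => (1:ℝ)) ω * f (g ω))
      =ᵐ[μ] fun ω => cprob m' μ (T ⁻¹' {t}) ω * (condExp m' μ (fun ω => f (g ω))) ω := by
  haveI : IsFiniteMeasure (μ.trim hm') := isFiniteMeasure_trim hm'
  haveI : SigmaFinite (μ.trim hm') := inferInstance
  set A : Set Ω := T ⁻¹' {t} with hAdef
  have hA : MeasurableSet A := hT (measurableSet_singleton t)
  set pA : Ω → ℝ := cprob m' μ A with hpAdef
  have hpA_sm : StronglyMeasurable[m'] pA := stronglyMeasurable_condExp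
  have hpA0 : 0 ≤ᵐ[μ] pA :=
    condExp_nonneg (by filter_upwards with ω; exact Set.indicator_nonneg (by simp) ω)
  have hpA1 : pA ≤ᵐ[μ] 1 := by
    have h := condExp_mono (m := m') (μ := μ)
      (integrable_indicator_iff hA |>.mpr (integrable_const (1:ℝ)).integrableOn)
      (integrable_const (1:ℝ)) ?_
    · rw [condExp_const hm'] at h
      exact h
    · filter_upwards with ω
      classical
      by_cases h : ω ∈ A <;> simp [Set.indicator, h]
  have hpA_bd : ∀ᵐ ω ∂μ, ‖pA ω‖ ≤ 1 := by
    filter_upwards [hpA0, hpA1] with ω h0 h1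
    simp only [Pi.zero_apply] at h0
    simp only [Pi.one_apply] at h1
    rw [Real.norm_eq_abs, abs_le]; exact ⟨by linarith, h1⟩
  have hind_int : ∀ (s : Set Ω), MeasurableSet s → Integrable (s.indicator (fun _ => (1:ℝ))) μ :=
    fun s hs => (integrable_indicator_iff hs).mpr (integrable_const (1:ℝ)).integrableOn
  have hpAInt : Integrable pA μ := integrable_condExp
  have key_sets : ∀ S, MeasurableSet[m'] S → ∀ u, MeasurableSet u →
      ∫ ω in S, (A ∩ g ⁻¹' u).indicator (fun _ => (1:ℝ)) ω ∂μ
        = ∫ ω in S, pA ω * (g ⁻¹' u).indicator (fun _ => (1:ℝ)) ω ∂μ := by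
    intro S hS u hu
    have h1 : ∫ ω in S, (A ∩ g ⁻¹' u).indicator (fun _ => (1:ℝ)) ω ∂μ
        = ∫ ω in S, condExp m' μ ((A ∩ g ⁻¹' u).indicator (fun _ => (1:ℝ))) ω ∂μ :=
      (setIntegral_condExp hm' (hind_int _ (hA.inter (hg hu))) hS).symm
    have h2 := hind {t} u (measurableSet_singleton t) hu
    simp only [cprob, cexp] at h2
    have h3 : Integrable (fun ω => pA ω * (g ⁻¹' u).indicator (fun _ => (1:ℝ)) ω) μ :=
      (hind_int _ (hg hu)).bdd_mul (hpA_sm.mono hm').aestronglyMeasurable hpA_bd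
    have h4 : condExp m' μ (fun ω => pA ω * (g ⁻¹' u).indicator (fun _ => (1:ℝ)) ω)
        =ᵐ[μ] fun ω => pA ω * condExp m' μ ((g ⁻¹' u).indicator (fun _ => (1:ℝ))) ω :=
      condExp_mul_of_stronglyMeasurable_left hpA_sm h3 (hind_int _ (hg hu))
    rw [h1, ← setIntegral_condExp hm' h3 hS]
    refine integral_congr_ae (ae_restrict_of_ae ?_)
    filter_upwards [h2, h4] with ω hω2 hω4
    rw [hω4]
    simp only [hpAdef, hAdef, cprob, cexp]
    rw [← hω2]
  have hpAm : Measurable pA := (hpA_sm.mono hm').measurable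
  have key_fun : ∀ S, MeasurableSet[m'] S →
      ∫ ω in S, A.indicator (fun _ => (1:ℝ)) ω * f (g ω) ∂μ
        = ∫ ω in S, pA ω * f (g ω) ∂μ := by
    intro S hS
    have hSm : MeasurableSet S := hm' _ hS
    have hνeq : (μ.restrict (S ∩ A)).map g
        = ((μ.restrict S).withDensity (fun ω => ENNReal.ofReal (pA ω))).map g := by
      ext u hu
      rw [Measure.map_apply hg hu, Measure.map_apply hg hu,
        Measure.restrict_apply (hg hu), withDensity_apply _ (hg hu),
        Measure.restrict_restrict (hg hu)]
      have hR : ∫⁻ ω in g ⁻¹' u ∩ S, ENNReal.ofReal (pA ω) ∂μ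
          = ENNReal.ofReal (∫ ω in g ⁻¹' u ∩ S, pA ω ∂μ) :=
        (ofReal_integral_eq_lintegral_ofReal hpAInt.restrict
          (ae_restrict_of_ae hpA0)).symm
      rw [hR]
      have e1 : ∫ ω in g ⁻¹' u ∩ S, pA ω ∂μ
          = ∫ ω in S, pA ω * (g ⁻¹' u).indicator (fun _ => (1:ℝ)) ω ∂μ := by
        rw [Set.inter_comm, ← setIntegral_indicator (hg hu)]
        refine integral_congr_ae (ae_restrict_of_ae ?_)
        filter_upwards with ω
        classical
        by_cases h : ω ∈ g ⁻¹' u <;> simp [h]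
      have e2 : ∫ ω in S, (A ∩ g ⁻¹' u).indicator (fun _ => (1:ℝ)) ω ∂μ
          = (μ (S ∩ (A ∩ g ⁻¹' u))).toReal := by
        rw [setIntegral_indicator (hA.inter (hg hu)), setIntegral_const, smul_eq_mul, mul_one]
        rfl
      rw [e1, ← key_sets S hS u hu, e2, ENNReal.ofReal_toReal (measure_ne_top μ _)]
      congr 1
      ext ω
      simp only [Set.mem_inter_iff, Set.mem_preimage]
      tauto
    have hi1 : ∫ y, f y ∂((μ.restrict (S ∩ A)).map g) = ∫ ω in S ∩ A, f (g ω) ∂μ :=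
      integral_map hg.aemeasurable hf.aestronglyMeasurable
    have hi2 : ∫ y, f y ∂(((μ.restrict S).withDensity (fun ω => ENNReal.ofReal (pA ω))).map g)
        = ∫ ω in S, pA ω * f (g ω) ∂μ := by
      rw [integral_map hg.aemeasurable hf.aestronglyMeasurable]
      have hd : (fun ω => ENNReal.ofReal (pA ω))
          = (fun ω => ((Real.toNNReal (pA ω) : ℝ≥0) : ℝ≥0∞)) := rfl
      rw [hd, integral_withDensity_eq_integral_smul₀
        (hpAm.real_toNNReal.aemeasurable.restrict) (fun ω => f (g ω))]
      refine integral_congr_ae (ae_restrict_of_ae ?_)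
      filter_upwards [hpA0] with ω h0
      simp only [Pi.zero_apply] at h0
      rw [NNReal.smul_def, smul_eq_mul, Real.coe_toNNReal _ h0]
    have e3 : ∫ ω in S, A.indicator (fun _ => (1:ℝ)) ω * f (g ω) ∂μ
        = ∫ ω in S ∩ A, f (g ω) ∂μ := by
      rw [← setIntegral_indicator hA]
      refine integral_congr_ae (ae_restrict_of_ae ?_)
      filter_upwards with ω
      classical
      by_cases h : ω ∈ A <;> simp [h]
    rw [e3, ← hi1, hνeq, hi2]
  have hint1 : Integrable (fun ω => A.indicator (fun _ => (1:ℝ)) ω * f (g ω)) μ := by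
    have he : (fun ω => A.indicator (fun _ => (1:ℝ)) ω * f (g ω))
        = A.indicator (fun ω => f (g ω)) := by
      classical
      funext ω
      by_cases h : ω ∈ A <;> simp [h]
    rw [he]; exact hfint.indicator hA
  have hintp : Integrable (fun ω => pA ω * f (g ω)) μ :=
    hfint.bdd_mul (hpA_sm.mono hm').aestronglyMeasurable hpA_bd
  have hmul := condExp_mul_of_stronglyMeasurable_left (μ := μ) hpA_sm hintp hfint
  refine (ae_eq_condExp_of_forall_setIntegral_eq hm' hint1 ?_ ?_ ?_).symm
  · intro s _ _
    exact (integrable_condExp.bdd_mul (hpA_sm.mono hm').aestronglyMeasurable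
      hpA_bd).integrableOn
  · intro s hs _
    have h5 : ∫ ω in s, pA ω * (condExp m' μ (fun ω => f (g ω))) ω ∂μ
        = ∫ ω in s, condExp m' μ (fun ω => pA ω * f (g ω)) ω ∂μ := by
      refine integral_congr_ae (ae_restrict_of_ae ?_)
      filter_upwards [hmul] with ω hω
      exact hω.symm
    rw [h5, setIntegral_condExp hm' hintp hs, key_fun s hs]
  · exact StronglyMeasurable.aestronglyMeasurable (hpA_sm.mul stronglyMeasurable_condExp)





lemma measurable_sigmaX' {Ω 𝒳 α : Type*} [MeasurableSpace 𝒳] [MeasurableSpace α] (X : Ω → 𝒳)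
    {h : 𝒳 → α} (hh : Measurable h) :
    Measurable[MeasurableSpace.comap X inferInstance] (fun ω => h (X ω)) :=
  fun s hs => ⟨h ⁻¹' s, hh hs, rfl⟩

lemma sigmaX_le' {Ω 𝒳 : Type*} [m0 : MeasurableSpace Ω] [MeasurableSpace 𝒳] {X : Ω → 𝒳}
    (hX : Measurable X) : MeasurableSpace.comap X inferInstance ≤ m0 := by
  rintro s ⟨u, hu, hs⟩
  exact hs ▸ hX hu

lemma step1 {Ω : Type*} [m0 : MeasurableSpace Ω] (μ : Measure Ω) [IsProbabilityMeasure μ]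
    {T Z W : Ω → ℝ} {t : ℝ} (hT : Measurable T)
    (hZind : IndepFun T Z μ) (hWind : IndepFun T W μ)
    (hZint : Integrable Z μ) (hWint : Integrable W μ)
    (hc : (μ (T ⁻¹' {t})).toReal ≠ 0) :
    ∫ ω, ((if T ω = t then (1:ℝ) else 0) * Z ω / (μ (T ⁻¹' {t})).toReal
      + (1 - (if T ω = t then (1:ℝ) else 0) / (μ (T ⁻¹' {t})).toReal) * W ω) ∂μ
      = ∫ ω, Z ω ∂μ := by
  classical
  set c : ℝ := (μ (T ⁻¹' {t})).toReal with hcdef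
  set I : Ω → ℝ := fun ω => if T ω = t then (1:ℝ) else 0 with hIdef
  have hIim : I = fun ω => (({t} : Set ℝ).indicator (fun _ => (1:ℝ))) (T ω) := by
    funext ω
    by_cases h : T ω = t <;> simp [hIdef, h]
  have hImeas : Measurable I := by
    rw [hIim]
    exact (measurable_const.indicator (measurableSet_singleton t)).comp hT
  have hIbd : ∀ᵐ ω ∂μ, ‖I ω‖ ≤ 1 := by
    filter_upwards with ω
    by_cases h : T ω = t <;> simp [hIdef, h]
  have hIint : Integrable I μ := by
    rw [hIim]
    exact ((integrable_indicator_iff (measurableSet_singleton t)).mpr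
      (integrable_const (1:ℝ)).integrableOn).comp_measurable hT
  have hIints : ∫ ω, I ω ∂μ = c := by
    rw [hIim]
    have : (fun ω => (({t} : Set ℝ).indicator (fun _ => (1:ℝ))) (T ω))
        = (T ⁻¹' {t}).indicator (fun _ => (1:ℝ)) := by
      funext ω
      by_cases h : T ω ∈ ({t} : Set ℝ) <;> simp [h, Set.indicator]
    rw [this, integral_indicator_const _ (hT (measurableSet_singleton t))]
    simp [hcdef, measureReal_def]
  have hIZind : IndepFun I Z μ := by
    rw [hIim]
    exact hZind.comp (measurable_const.indicator (measurableSet_singleton t)) measurable_id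
  have hIWind : IndepFun I W μ := by
    rw [hIim]
    exact hWind.comp (measurable_const.indicator (measurableSet_singleton t)) measurable_id
  have hIZ : ∫ ω, I ω * Z ω ∂μ = c * ∫ ω, Z ω ∂μ := by
    rw [hIZind.integral_fun_mul_eq_mul_integral hImeas.aestronglyMeasurable hZint.aestronglyMeasurable, hIints]
  have hIW : ∫ ω, I ω * W ω ∂μ = c * ∫ ω, W ω ∂μ := by
    rw [hIWind.integral_fun_mul_eq_mul_integral hImeas.aestronglyMeasurable hWint.aestronglyMeasurable, hIints]
  have hIZint : Integrable (fun ω => I ω * Z ω) μ := hZint.bdd_mul hImeas.aestronglyMeasurable hIbd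
  have hIWint : Integrable (fun ω => I ω * W ω) μ := hWint.bdd_mul hImeas.aestronglyMeasurable hIbd
  have hform : (fun ω => I ω * Z ω / c + (1 - I ω / c) * W ω)
      = fun ω => c⁻¹ * (I ω * Z ω) + (W ω - c⁻¹ * (I ω * W ω)) := by
    funext ω
    ring
  have h6 : Integrable (fun ω => W ω - c⁻¹ * (I ω * W ω)) μ := by
    exact hWint.sub (hIWint.const_mul _)
  have h7 : Integrable (fun ω => c⁻¹ * (I ω * Z ω)) μ := hIZint.const_mul _
  rw [hform, integral_add h7 h6, integral_const_mul _ _,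
    integral_sub hWint (hIWint.const_mul _), integral_const_mul, hIZ, hIW]
  field_simp
  ring

lemma integral_split {Ω : Type*} [m0 : MeasurableSpace Ω] (P : Measure Ω) [IsProbabilityMeasure P]
    {A : Set Ω} (hA : MeasurableSet A) (h0 : P A ≠ 0) (h0' : P Aᶜ ≠ 0) {F : Ω → ℝ}
    (hF : Integrable F P) :
    ∫ ω, F ω ∂P = (P A).toReal * ∫ ω, F ω ∂(ProbabilityTheory.cond P A)
      + (P Aᶜ).toReal * ∫ ω, F ω ∂(ProbabilityTheory.cond P Aᶜ) := by
  have key : ∀ s : Set Ω, P s ≠ 0 →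
      (P s).toReal * ∫ ω, F ω ∂(ProbabilityTheory.cond P s) = ∫ ω in s, F ω ∂P := by
    intro s hs
    rw [ProbabilityTheory.cond, integral_smul_measure, ENNReal.toReal_inv, smul_eq_mul]
    rw [← mul_assoc, mul_inv_cancel₀ (by simp [hs, ENNReal.toReal_ne_zero, measure_ne_top]),
      one_mul]
  rw [key A h0, key Aᶜ h0', integral_add_compl hA hF]



lemma step2 {Ω : Type*} {m' : MeasurableSpace Ω} [m0 : MeasurableSpace Ω]
    (hm' : m' ≤ m0) (μ : Measure Ω) [IsProbabilityMeasure μ]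
    {T Z V U : Ω → ℝ} {t : ℝ} (hT : Measurable T) (hZint : Integrable Z μ)
    (hVsm : StronglyMeasurable[m'] V) (hUsm : StronglyMeasurable[m'] U)
    {ε : ℝ} (hε : 0 < ε) (hV : ∀ ω, ε ≤ V ω ∧ V ω ≤ 1)
    {C : ℝ} (hU : ∀ ω, |U ω| ≤ C)
    (hfact : condExp m' μ (fun ω => (T ⁻¹' {t}).indicator (fun _ => (1:ℝ)) ω * Z ω)
      =ᵐ[μ] fun ω => condExp m' μ ((T ⁻¹' {t}).indicator (fun _ => (1:ℝ))) ω
        * condExp m' μ Z ω)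
    (hrob : V =ᵐ[μ] condExp m' μ ((T ⁻¹' {t}).indicator (fun _ => (1:ℝ)))
      ∨ U =ᵐ[μ] condExp m' μ Z) :
    ∫ ω, ((if T ω = t then (1:ℝ) else 0) * Z ω / V ω
      + (1 - (if T ω = t then (1:ℝ) else 0) / V ω) * U ω) ∂μ = ∫ ω, Z ω ∂μ := by
  classical
  haveI : IsFiniteMeasure (μ.trim hm') := isFiniteMeasure_trim hm'
  haveI : SigmaFinite (μ.trim hm') := inferInstance
  set I : Ω → ℝ := (T ⁻¹' {t}).indicator (fun _ => (1:ℝ)) with hIdef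
  have hIA : MeasurableSet (T ⁻¹' {t}) := hT (measurableSet_singleton t)
  have hIte : ∀ ω, (if T ω = t then (1:ℝ) else 0) = I ω := by
    intro ω
    by_cases h : T ω = t <;> simp [hIdef, h]
  have hImeas : Measurable I := measurable_const.indicator hIA
  have hIbd : ∀ᵐ ω ∂μ, ‖I ω‖ ≤ 1 := by
    filter_upwards with ω
    by_cases h : ω ∈ T ⁻¹' {t} <;> simp [hIdef, h, Set.indicator]
  have hIint : Integrable I μ :=
    (integrable_indicator_iff hIA).mpr (integrable_const (1:ℝ)).integrableOn
  have hUmeas : Measurable U := (hUsm.mono hm').measurable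
  have hVmeas : Measurable V := (hVsm.mono hm').measurable
  have hUint : Integrable U μ :=
    (integrable_const C).mono' hUmeas.aestronglyMeasurable
      (by filter_upwards with ω; simpa using hU ω)
  have hVpos : ∀ ω, 0 < V ω := fun ω => lt_of_lt_of_le hε (hV ω).1
  -- rewrite the integrand
  have hform : (fun ω => (if T ω = t then (1:ℝ) else 0) * Z ω / V ω
      + (1 - (if T ω = t then (1:ℝ) else 0) / V ω) * U ω)
      = fun ω => U ω + (V ω)⁻¹ * (I ω * Z ω - U ω * I ω) := by
    funext ω
    rw [hIte ω]
    field_simp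
    ring
  -- integrability pieces
  have hIZint : Integrable (fun ω => I ω * Z ω) μ :=
    hZint.bdd_mul hImeas.aestronglyMeasurable hIbd
  have hUIint : Integrable (fun ω => U ω * I ω) μ := by
    refine hIint.bdd_mul (c := C) hUmeas.aestronglyMeasurable ?_
    filter_upwards with ω; simpa using hU ω
  have hGint : Integrable (fun ω => I ω * Z ω - U ω * I ω) μ := hIZint.sub hUIint
  have hVinv_sm : StronglyMeasurable[m'] (fun ω => (V ω)⁻¹) :=
    (Measurable.inv hVsm.measurable).stronglyMeasurable
  have hVinv_bd : ∀ᵐ ω ∂μ, ‖(V ω)⁻¹‖ ≤ ε⁻¹ := by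
    filter_upwards with ω
    rw [Real.norm_eq_abs, abs_of_nonneg (inv_nonneg.mpr (hVpos ω).le)]
    exact inv_anti₀ hε (hV ω).1
  have hVGint : Integrable (fun ω => (V ω)⁻¹ * (I ω * Z ω - U ω * I ω)) μ :=
    hGint.bdd_mul (hVinv_sm.mono hm').aestronglyMeasurable hVinv_bd
  -- conditional expectation of G
  have hpull : condExp m' μ (fun ω => U ω * I ω) =ᵐ[μ] fun ω => U ω * condExp m' μ I ω :=
    condExp_mul_of_stronglyMeasurable_left hUsm hUIint hIint
  have hcondG : condExp m' μ (fun ω => I ω * Z ω - U ω * I ω)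
      =ᵐ[μ] fun ω => condExp m' μ I ω * condExp m' μ Z ω - U ω * condExp m' μ I ω := by
    have hsub := condExp_sub (μ := μ) (m := m') hIZint hUIint
    refine hsub.trans ?_
    filter_upwards [hfact, hpull] with ω h1 h2
    simp only [Pi.sub_apply]
    rw [h1, h2]
  -- pull out V⁻¹
  have hVpull : condExp m' μ (fun ω => (V ω)⁻¹ * (I ω * Z ω - U ω * I ω))
      =ᵐ[μ] fun ω => (V ω)⁻¹ * condExp m' μ (fun ω => I ω * Z ω - U ω * I ω) ω :=
    condExp_mul_of_stronglyMeasurable_left hVinv_sm hVGint hGint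
  have hmain : ∫ ω, (V ω)⁻¹ * (I ω * Z ω - U ω * I ω) ∂μ
      = ∫ ω, (V ω)⁻¹ * (condExp m' μ I ω * condExp m' μ Z ω - U ω * condExp m' μ I ω) ∂μ := by
    rw [← integral_condExp hm' (f := fun ω => (V ω)⁻¹ * (I ω * Z ω - U ω * I ω))]
    refine integral_congr_ae ?_
    refine hVpull.trans ?_
    filter_upwards [hcondG] with ω hω
    rw [hω]
  rw [hform, integral_add hUint hVGint, hmain]
  rcases hrob with hrobV | hrobU
  · have he : ∫ ω, (V ω)⁻¹ * (condExp m' μ I ω * condExp m' μ Z ω - U ω * condExp m' μ I ω) ∂μ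
        = ∫ ω, (condExp m' μ Z ω - U ω) ∂μ := by
      refine integral_congr_ae ?_
      filter_upwards [hrobV] with ω hω
      rw [← hω]
      have hne := (hVpos ω).ne'
      field_simp
    rw [he, integral_sub integrable_condExp hUint, integral_condExp hm' (f := Z)]
    ring
  · have he : ∫ ω, (V ω)⁻¹ * (condExp m' μ I ω * condExp m' μ Z ω - U ω * condExp m' μ I ω) ∂μ
        = 0 := by
      rw [← integral_zero Ω ℝ (μ := μ)]
      refine integral_congr_ae ?_
      filter_upwards [hrobU] with ω hω
      rw [hω]
      ring
    have hU' : ∫ ω, U ω ∂μ = ∫ ω, Z ω ∂μ := by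
      rw [integral_congr_ae hrobU, integral_condExp hm' (f := Z)]
    rw [he, hU']
    ring

lemma integrable_cond' {Ω : Type*} [m0 : MeasurableSpace Ω] {P : Measure Ω} {f : Ω → ℝ}
    (hf : Integrable f P) {s : Set Ω} (hs : P s ≠ 0) :
    Integrable f (ProbabilityTheory.cond P s) := by
  rw [ProbabilityTheory.cond]
  exact (hf.restrict).smul_measure (ENNReal.inv_ne_top.mpr hs)

lemma ae_cond' {Ω : Type*} [m0 : MeasurableSpace Ω] {P : Measure Ω} {p : Ω → Prop}
    (h : ∀ᵐ ω ∂P, p ω) (s : Set Ω) : ∀ᵐ ω ∂(ProbabilityTheory.cond P s), p ω :=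
  (ProbabilityTheory.cond_absolutelyContinuous).ae_le h

lemma ae_mem_cond' {Ω : Type*} [m0 : MeasurableSpace Ω] (P : Measure Ω) {s : Set Ω}
    (hs : MeasurableSet s) : ∀ᵐ ω ∂(ProbabilityTheory.cond P s), ω ∈ s := by
  rw [ae_iff]
  have he : {ω | ¬ ω ∈ s} = sᶜ := rfl
  rw [he, ProbabilityTheory.cond_apply hs, Set.inter_compl_self, measure_empty, mul_zero]


theorem stmt3
    {Ω 𝒳 : Type*} [MeasurableSpace Ω] [MeasurableSpace 𝒳] [StandardBorelSpace 𝒳]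
    (P : Measure Ω) [IsProbabilityMeasure P]
    (X : Ω → 𝒳) (R T Y₁ Y₀ Y : Ω → ℝ) (Yt : ℝ → Ω → ℝ)
    (hX : Measurable X) (hR : Measurable R) (hT : Measurable T)
    (hY₁m : Measurable Y₁) (hY₀m : Measurable Y₀)
    (hRbin : ∀ ω, R ω = 0 ∨ R ω = 1) (hTbin : ∀ ω, T ω = 0 ∨ T ω = 1)
    (hY₁2 : MemLp Y₁ 2 P) (hY₀2 : MemLp Y₀ 2 P)
    (hY : Y = fun ω => T ω * Y₁ ω + (1 - T ω) * Y₀ ω)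
    (hYt1 : Yt 1 = Y₁) (hYt0 : Yt 0 = Y₀)
    (ε : ℝ) (hε : 0 < ε)
    (hlam_pos : 0 < P {ω | R ω = 1}) (hlam_lt : P {ω | R ω = 1} < 1)
    (hlamX : ∀ᵐ ω ∂P, ε ≤ cprob (sigmaX X) P {ω' | R ω' = 1} ω ∧
      cprob (sigmaX X) P {ω' | R ω' = 1} ω ≤ 1 - ε)
    (hpi : ∀ r ∈ ({0, 1} : Set ℝ), ∀ t ∈ ({0, 1} : Set ℝ), ∀ᵐ ω ∂P,
      ε ≤ cprob (sigmaX X) (ProbabilityTheory.cond P {ω' | R ω' = r}) {ω' | T ω' = t} ω ∧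
      cprob (sigmaX X) (ProbabilityTheory.cond P {ω' | R ω' = r}) {ω' | T ω' = t} ω ≤ 1 - ε)
    (hA1 : IndepFun T (fun ω => (Y₁ ω, Y₀ ω, X ω)) (ProbabilityTheory.cond P {ω | R ω = 1}))
    (hA2 : CondIndepFunGiven (sigmaX X) T (fun ω => (Y₁ ω, Y₀ ω))
      (ProbabilityTheory.cond P {ω | R ω = 0}))
    (t : ℝ) (ht : t = 0 ∨ t = 1)
    (τd1 : 𝒳 → ℝ) (hτd1m : Measurable τd1) (hτd1b : ∃ C, ∀ x, |τd1 x| ≤ C)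
    (πd : 𝒳 → ℝ) (hπdm : Measurable πd) (hπdr : ∀ x, πd x ∈ Set.Icc ε (1 - ε))
    (τd0 : 𝒳 → ℝ) (hτd0m : Measurable τd0) (hτd0b : ∃ C, ∀ x, |τd0 x| ≤ C)
    (hrob : (fun ω => πd (X ω)) =ᵐ[P] cprob (sigmaX X) (ProbabilityTheory.cond P {ω' | R ω' = 0}) {ω' | T ω' = t} ∨
      (fun ω => τd0 (X ω)) =ᵐ[P] cexp (sigmaX X) (ProbabilityTheory.cond P {ω' | R ω' = 0}) (Yt t))
    :
    ∫ ω, ((if T ω = t then (1 : ℝ) else 0) * Y ω / (R ω * ((ProbabilityTheory.cond P {ω' | R ω' = 1}) {ω' | T ω' = t}).toReal + (1 - R ω) * πd (X ω))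
      + (1 - (if T ω = t then (1 : ℝ) else 0) / (R ω * ((ProbabilityTheory.cond P {ω' | R ω' = 1}) {ω' | T ω' = t}).toReal + (1 - R ω) * πd (X ω))) * (R ω * τd1 (X ω) + (1 - R ω) * τd0 (X ω))) ∂P = (∫ ω', Yt t ω' ∂P) := by
  classical
  -- basic sets and measures
  have hAm : MeasurableSet {ω | R ω = 1} := hR (measurableSet_singleton 1)
  have hA0eq : {ω | R ω = 0} = {ω | R ω = 1}ᶜ := by
    ext ω
    simp only [Set.mem_setOf_eq, Set.mem_compl_iff]
    rcases hRbin ω with h | h <;> simp [h]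
  have hPA0 : P {ω | R ω = 1} ≠ 0 := hlam_pos.ne'
  have hPAc : P {ω | R ω = 1}ᶜ ≠ 0 := by
    rw [prob_compl_eq_one_sub hAm]
    intro h
    exact absurd (tsub_eq_zero_iff_le.mp h) (not_le.mpr hlam_lt)
  haveI i1 : IsProbabilityMeasure (ProbabilityTheory.cond P {ω | R ω = 1}) :=
    ProbabilityTheory.cond_isProbabilityMeasure hPA0
  haveI i0 : IsProbabilityMeasure (ProbabilityTheory.cond P {ω | R ω = 1}ᶜ) :=
    ProbabilityTheory.cond_isProbabilityMeasure hPAc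
  have hsle : sigmaX X ≤ ‹MeasurableSpace Ω› := sigmaX_le' hX
  rw [hA0eq] at hA2 hrob
  -- the constant c
  set μ1 := ProbabilityTheory.cond P {ω | R ω = 1} with hμ1def
  set μ0 := ProbabilityTheory.cond P {ω | R ω = 1}ᶜ with hμ0def
  set c : ℝ := (μ1 {ω' | T ω' = t}).toReal with hcdef
  have hTtm : MeasurableSet {ω' | T ω' = t} := hT (measurableSet_singleton t)
  haveI : IsFiniteMeasure (μ1.trim hsle) := isFiniteMeasure_trim hsle
  haveI : SigmaFinite (μ1.trim hsle) := inferInstance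
  haveI : IsFiniteMeasure (μ0.trim hsle) := isFiniteMeasure_trim hsle
  haveI : SigmaFinite (μ0.trim hsle) := inferInstance
  have hεc : ε ≤ c := by
    have hmem1 : (1:ℝ) ∈ ({0,1} : Set ℝ) := by norm_num
    have hmemt : t ∈ ({0,1} : Set ℝ) := by rcases ht with rfl | rfl <;> norm_num
    have hpi1 := hpi 1 hmem1 t hmemt
    have hpi1' : ∀ᵐ ω ∂μ1, ε ≤ cprob (sigmaX X) μ1 {ω' | T ω' = t} ω := by
      refine ae_cond' ?_ _
      filter_upwards [hpi1] with ω hω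
      exact hω.1
    have hcint : c = ∫ ω, cprob (sigmaX X) μ1 {ω' | T ω' = t} ω ∂μ1 := by
      rw [cprob, cexp, integral_condExp hsle]
      have he : ({ω' | T ω' = t}).indicator (fun _ => (1:ℝ))
          = ({ω' | T ω' = t}).indicator (fun _ => (1:ℝ)) := rfl
      rw [integral_indicator_const _ hTtm, smul_eq_mul, mul_one]
      rfl
    have hmono : ∫ ω, (ε : ℝ) ∂μ1 ≤ ∫ ω, cprob (sigmaX X) μ1 {ω' | T ω' = t} ω ∂μ1 :=
      integral_mono_ae (integrable_const ε) integrable_condExp hpi1'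
    simpa [hcint] using hmono
  have hc0 : c ≠ 0 := (lt_of_lt_of_le hε hεc).ne'
  -- the outcome function
  obtain ⟨f, hfm, hfe⟩ : ∃ f : ℝ × ℝ → ℝ, Measurable f ∧ ∀ ω, f (Y₁ ω, Y₀ ω) = Yt t ω := by
    rcases ht with rfl | rfl
    · exact ⟨fun p => p.2, measurable_snd, fun ω => by rw [hYt0]⟩
    · exact ⟨fun p => p.1, measurable_fst, fun ω => by rw [hYt1]⟩
  have hZm : Measurable (Yt t) := by
    rcases ht with rfl | rfl
    · rw [hYt0]; exact hY₀m
    · rw [hYt1]; exact hY₁m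
  have hZint : Integrable (Yt t) P := by
    rcases ht with rfl | rfl
    · rw [hYt0]; exact hY₀2.integrable one_le_two
    · rw [hYt1]; exact hY₁2.integrable one_le_two
  have hcons : ∀ ω, T ω = t → Y ω = Yt t ω := by
    intro ω h
    rcases ht with rfl | rfl
    · rw [hY, hYt0]; simp [h]
    · rw [hY, hYt1]; simp [h]
  have hYm : Measurable Y := by
    rw [hY]; exact (hT.mul hY₁m).add ((measurable_const.sub hT).mul hY₀m)
  have hYabs : ∀ ω, |Y ω| ≤ |Y₁ ω| + |Y₀ ω| := by
    intro ω
    rcases hTbin ω with h | h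
    · rw [hY]; simp only [h]; ring_nf
      calc |Y₀ ω| ≤ |Y₁ ω| + |Y₀ ω| := le_add_of_nonneg_left (abs_nonneg _)
        _ = _ := by ring_nf
    · rw [hY]; simp only [h]; ring_nf
      calc |Y₁ ω| ≤ |Y₁ ω| + |Y₀ ω| := le_add_of_nonneg_right (abs_nonneg _)
        _ = _ := by ring_nf
  -- bounds for the nuisance functions
  obtain ⟨C1, hC1⟩ := hτd1b
  obtain ⟨C0, hC0⟩ := hτd0b
  set K : ℝ := max C1 0 + max C0 0 with hKdef
  have hτbd : ∀ ω, |R ω * τd1 (X ω) + (1 - R ω) * τd0 (X ω)| ≤ K := by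
    intro ω
    rcases hRbin ω with h | h <;> simp [h, hKdef]
    · exact le_add_of_nonneg_left (le_max_right _ _) |>.trans'
        ((hC0 (X ω)).trans (le_max_left _ _))
    · exact le_add_of_nonneg_right (le_max_right _ _) |>.trans'
        ((hC1 (X ω)).trans (le_max_left _ _))
  -- denominator bound
  have hDlb : ∀ ω, ε ≤ R ω * c + (1 - R ω) * πd (X ω) := by
    intro ω
    rcases hRbin ω with h | h <;> simp [h]
    · exact (hπdr (X ω)).1
    · exact hεc
  have hDpos : ∀ ω, 0 < R ω * c + (1 - R ω) * πd (X ω) := fun ω => lt_of_lt_of_le hε (hDlb ω)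
  -- integrability of the integrand
  have hFbd : ∀ ω, |(if T ω = t then (1:ℝ) else 0) * Y ω / (R ω * c + (1 - R ω) * πd (X ω))
      + (1 - (if T ω = t then (1:ℝ) else 0) / (R ω * c + (1 - R ω) * πd (X ω)))
        * (R ω * τd1 (X ω) + (1 - R ω) * τd0 (X ω))|
      ≤ ε⁻¹ * (|Y₁ ω| + |Y₀ ω|) + (1 + ε⁻¹) * K := by
    intro ω
    set D := R ω * c + (1 - R ω) * πd (X ω) with hDdef
    set I := if T ω = t then (1:ℝ) else 0 with hIdef
    have hI01 : |I| ≤ 1 := by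
      rw [hIdef]; split <;> norm_num
    have hD := hDpos ω
    have hDε := hDlb ω
    have h1 : |I * Y ω / D| ≤ ε⁻¹ * (|Y₁ ω| + |Y₀ ω|) := by
      rw [abs_div, abs_mul, abs_of_pos hD]
      calc |I| * |Y ω| / D ≤ 1 * (|Y₁ ω| + |Y₀ ω|) / ε :=
            div_le_div₀ (by positivity)
              (mul_le_mul hI01 (hYabs ω) (abs_nonneg _) one_pos.le) hε hDε
        _ = ε⁻¹ * (|Y₁ ω| + |Y₀ ω|) := by field_simp
    have h2 : |(1 - I / D) * (R ω * τd1 (X ω) + (1 - R ω) * τd0 (X ω))| ≤ (1 + ε⁻¹) * K := by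
      rw [abs_mul]
      have h3 : |1 - I / D| ≤ 1 + ε⁻¹ := by
        refine (abs_sub _ _).trans ?_
        have : |I / D| ≤ ε⁻¹ := by
          rw [abs_div, abs_of_pos hD]
          calc |I| / D ≤ 1 / ε := div_le_div₀ (by norm_num) hI01 hε hDε
            _ = ε⁻¹ := one_div ε
        simp only [abs_one]
        linarith
      have hK0 : 0 ≤ K := by positivity
      exact mul_le_mul h3 (hτbd ω) (abs_nonneg _) (by positivity)
    calc |I * Y ω / D + (1 - I / D) * (R ω * τd1 (X ω) + (1 - R ω) * τd0 (X ω))|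
        ≤ |I * Y ω / D| + |(1 - I / D) * (R ω * τd1 (X ω) + (1 - R ω) * τd0 (X ω))| :=
          abs_add_le _ _
      _ ≤ ε⁻¹ * (|Y₁ ω| + |Y₀ ω|) + (1 + ε⁻¹) * K := add_le_add h1 h2
  have hFmeas : Measurable (fun ω => (if T ω = t then (1:ℝ) else 0) * Y ω
      / (R ω * c + (1 - R ω) * πd (X ω))
      + (1 - (if T ω = t then (1:ℝ) else 0) / (R ω * c + (1 - R ω) * πd (X ω)))
        * (R ω * τd1 (X ω) + (1 - R ω) * τd0 (X ω))) := by
    have hIm : Measurable (fun ω => if T ω = t then (1:ℝ) else 0) :=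
      Measurable.ite (hT (measurableSet_singleton t)) measurable_const measurable_const
    have hDm : Measurable (fun ω => R ω * c + (1 - R ω) * πd (X ω)) :=
      (hR.mul measurable_const).add ((measurable_const.sub hR).mul (hπdm.comp hX))
    have hτm : Measurable (fun ω => R ω * τd1 (X ω) + (1 - R ω) * τd0 (X ω)) :=
      (hR.mul (hτd1m.comp hX)).add ((measurable_const.sub hR).mul (hτd0m.comp hX))
    exact ((hIm.mul hYm).div hDm).add
      ((measurable_const.sub (hIm.div hDm)).mul hτm)
  have hGint : Integrable (fun ω => ε⁻¹ * (|Y₁ ω| + |Y₀ ω|) + (1 + ε⁻¹) * K) P := by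
    refine Integrable.add ?_ (integrable_const _)
    exact (((hY₁2.integrable one_le_two).abs.add (hY₀2.integrable one_le_two).abs).const_mul _)
  have hFint : Integrable (fun ω => (if T ω = t then (1:ℝ) else 0) * Y ω
      / (R ω * c + (1 - R ω) * πd (X ω))
      + (1 - (if T ω = t then (1:ℝ) else 0) / (R ω * c + (1 - R ω) * πd (X ω)))
        * (R ω * τd1 (X ω) + (1 - R ω) * τd0 (X ω))) P := by
    refine hGint.mono' hFmeas.aestronglyMeasurable ?_
    filter_upwards with ω
    rw [Real.norm_eq_abs]
    exact hFbd ω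
  -- part 1 : integral over R = 1
  have part1 : ∫ ω, ((if T ω = t then (1:ℝ) else 0) * Y ω
      / (R ω * c + (1 - R ω) * πd (X ω))
      + (1 - (if T ω = t then (1:ℝ) else 0) / (R ω * c + (1 - R ω) * πd (X ω)))
        * (R ω * τd1 (X ω) + (1 - R ω) * τd0 (X ω))) ∂μ1 = ∫ ω, Yt t ω ∂μ1 := by
    have hc' : (μ1 (T ⁻¹' {t})).toReal = c := by
      rw [hcdef]
      exact congrArg ENNReal.toReal (congrArg μ1 (Set.ext fun ω => Iff.rfl))
    have hae1 : ∀ᵐ ω ∂μ1, ω ∈ {ω | R ω = 1} := by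
      rw [hμ1def]; exact ae_mem_cond' P hAm
    have hcongr : (fun ω => (if T ω = t then (1:ℝ) else 0) * Y ω
        / (R ω * c + (1 - R ω) * πd (X ω))
        + (1 - (if T ω = t then (1:ℝ) else 0) / (R ω * c + (1 - R ω) * πd (X ω)))
          * (R ω * τd1 (X ω) + (1 - R ω) * τd0 (X ω)))
        =ᵐ[μ1] fun ω => (if T ω = t then (1:ℝ) else 0) * Yt t ω / (μ1 (T ⁻¹' {t})).toReal
          + (1 - (if T ω = t then (1:ℝ) else 0) / (μ1 (T ⁻¹' {t})).toReal) * τd1 (X ω) := by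
      filter_upwards [hae1] with ω hω
      have hR1 : R ω = 1 := hω
      rw [hc']
      by_cases h : T ω = t
      · rw [hcons ω h]
        simp [hR1, h]
      · simp [hR1, h]
    rw [integral_congr_ae hcongr]
    have hproj : Measurable (fun p : ℝ × ℝ × 𝒳 => f (p.1, p.2.1)) :=
      hfm.comp (measurable_fst.prodMk (measurable_fst.comp measurable_snd))
    have hZind : IndepFun T (Yt t) μ1 := by
      have h := hA1.comp measurable_id hproj
      have e2 : ((fun p : ℝ × ℝ × 𝒳 => f (p.1, p.2.1)) ∘ fun ω => (Y₁ ω, Y₀ ω, X ω)) = Yt t :=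
        funext fun ω => hfe ω
      rw [show (id ∘ T) = T from rfl, e2] at h
      exact h
    have hWind : IndepFun T (fun ω => τd1 (X ω)) μ1 := by
      have h := hA1.comp measurable_id (hτd1m.comp (measurable_snd.comp measurable_snd))
      exact h
    have hZint1 : Integrable (Yt t) μ1 := integrable_cond' hZint hPA0
    have hWint1 : Integrable (fun ω => τd1 (X ω)) μ1 :=
      (integrable_const (max C1 0)).mono' (hτd1m.comp hX).aestronglyMeasurable
        (by filter_upwards with ω
            rw [Real.norm_eq_abs]
            exact (hC1 _).trans (le_max_left _ _))
    exact step1 μ1 hT hZind hWind hZint1 hWint1 (hc'.symm ▸ hc0)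
  -- part 0 : integral over R = 0
  have part0 : ∫ ω, ((if T ω = t then (1:ℝ) else 0) * Y ω
      / (R ω * c + (1 - R ω) * πd (X ω))
      + (1 - (if T ω = t then (1:ℝ) else 0) / (R ω * c + (1 - R ω) * πd (X ω)))
        * (R ω * τd1 (X ω) + (1 - R ω) * τd0 (X ω))) ∂μ0 = ∫ ω, Yt t ω ∂μ0 := by
    have hae0 : ∀ᵐ ω ∂μ0, ω ∈ {ω | R ω = 1}ᶜ := by
      rw [hμ0def]; exact ae_mem_cond' P hAm.compl
    have hcongr : (fun ω => (if T ω = t then (1:ℝ) else 0) * Y ω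
        / (R ω * c + (1 - R ω) * πd (X ω))
        + (1 - (if T ω = t then (1:ℝ) else 0) / (R ω * c + (1 - R ω) * πd (X ω)))
          * (R ω * τd1 (X ω) + (1 - R ω) * τd0 (X ω)))
        =ᵐ[μ0] fun ω => (if T ω = t then (1:ℝ) else 0) * Yt t ω / πd (X ω)
          + (1 - (if T ω = t then (1:ℝ) else 0) / πd (X ω)) * τd0 (X ω) := by
      filter_upwards [hae0] with ω hω
      have hR0 : R ω = 0 := by
        rcases hRbin ω with h | h
        · exact h
        · exact absurd h hω
      by_cases h : T ω = t
      · rw [hcons ω h]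
        simp [hR0, h]
      · simp [hR0, h]
    rw [integral_congr_ae hcongr]
    have hgm : Measurable (fun ω => (Y₁ ω, Y₀ ω)) := hY₁m.prodMk hY₀m
    have hYteq : (fun ω => f (Y₁ ω, Y₀ ω)) = Yt t := funext hfe
    have hfint0 : Integrable (fun ω => f (Y₁ ω, Y₀ ω)) μ0 := by
      rw [hYteq]; exact integrable_cond' hZint hPAc
    have hfact := condexp_indicator_mul_comp hsle μ0 hT hgm hA2 t hfm hfint0
    simp only [cprob, cexp, hfe] at hfact
    have hVsm : StronglyMeasurable[sigmaX X] (fun ω => πd (X ω)) :=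
      (measurable_sigmaX' X hπdm).stronglyMeasurable
    have hUsm : StronglyMeasurable[sigmaX X] (fun ω => τd0 (X ω)) :=
      (measurable_sigmaX' X hτd0m).stronglyMeasurable
    have hV : ∀ ω, ε ≤ πd (X ω) ∧ πd (X ω) ≤ 1 := by
      intro ω
      refine ⟨(hπdr (X ω)).1, (hπdr (X ω)).2.trans (by linarith)⟩
    have hU : ∀ ω, |τd0 (X ω)| ≤ max C0 0 := fun ω => (hC0 _).trans (le_max_left _ _)
    have hrob' : (fun ω => πd (X ω)) =ᵐ[μ0]
          condExp (sigmaX X) μ0 ((T ⁻¹' {t}).indicator (fun _ => (1:ℝ)))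
        ∨ (fun ω => τd0 (X ω)) =ᵐ[μ0] condExp (sigmaX X) μ0 (Yt t) := by
      rcases hrob with h | h
      · left
        simp only [cprob, cexp] at h
        exact ae_cond' h _
      · right
        simp only [cexp] at h
        exact ae_cond' h _
    exact step2 hsle μ0 hT (integrable_cond' hZint hPAc) hVsm hUsm hε hV hU hfact hrob' 
  rw [integral_split P hAm hPA0 hPAc hFint,
    integral_split P hAm hPA0 hPAc hZint, ← hμ1def, ← hμ0def, part1, part0]
end
end

section
/- Assume (A1) and (A2), and fix t ∈ {0,1}. Let π† : 𝒳 → [ε, 1−ε] be measurable, let τ†₁, τ†₀ : 𝒳 → ℝ be bounded measurable, and set π̃(R,X) = R·π_{t1} + (1−R)·π†(X) and τ̃(R,X) = R·τ†₁(X) + (1−R)·τ†₀(X). Then the remainder term of the one-step expansion satisfies the second-order identity E[ 1{T=t}·Y / π̃(R,X) + (1 − 1{T=t} / π̃(R,X))·τ̃(R,X) ] − μ_t = E[ (1−R)·( π_t(0,X)/π†(X) − 1 )·( τ_t(0,X) − τ†₀(X) ) ]. -/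
open MeasureTheory ProbabilityTheory Set

noncomputable section

lemma integral_mul_condexp {Ω : Type*} {m m0 : MeasurableSpace Ω} (hm : m ≤ m0) (μ : Measure Ω)
    [IsFiniteMeasure μ] {b g : Ω → ℝ} (hb : StronglyMeasurable[m] b) {c : ℝ}
    (hbc : ∀ᵐ ω ∂μ, |b ω| ≤ c) (hg : Integrable g μ) :
    ∫ ω, b ω * g ω ∂μ = ∫ ω, b ω * (μ[g|m]) ω ∂μ := by
  have hbm0 : AEStronglyMeasurable b μ := (hb.mono hm).aestronglyMeasurable
  have hbg : Integrable (fun ω => b ω * g ω) μ :=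
    hg.bdd_mul hbm0 (by simpa [Real.norm_eq_abs] using hbc)
  have hbg' : Integrable (b * g) μ := hbg
  have h1 := condExp_mul_of_stronglyMeasurable_left hb hbg' hg
  calc ∫ ω, b ω * g ω ∂μ = ∫ ω, (μ[b * g|m]) ω ∂μ := (integral_condExp hm).symm
    _ = ∫ ω, b ω * (μ[g|m]) ω ∂μ := by
        refine integral_congr_ae (h1.mono fun ω hω => ?_)
        simpa using hω

lemma key_condIndep {Ω 𝒳 : Type*} [MeasurableSpace 𝒳] {m0 : MeasurableSpace Ω}
    (μ : Measure Ω) [IsProbabilityMeasure μ] (X : Ω → 𝒳) (hX : Measurable X)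
    (T : Ω → ℝ) (hT : Measurable T) (G : Ω → ℝ × ℝ) (hG : Measurable G)
    (hCI : CondIndepFunGiven (sigmaX X) T G μ) (t : ℝ)
    (Φ : 𝒳 × (ℝ × ℝ) → ℝ) (hΦ : Measurable Φ) :
    ∫ ω, (if T ω = t then (1:ℝ) else 0) * Φ (X ω, G ω) ∂μ
      = ∫ ω, cprob (sigmaX X) μ {ω' | T ω' = t} ω * Φ (X ω, G ω) ∂μ := by
  have hm : sigmaX X ≤ m0 := measurable_iff_comap_le.mp hX
  set A : Set Ω := {ω' | T ω' = t} with hA_def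
  have hAm : MeasurableSet A := hT (measurableSet_singleton t)
  set π : Ω → ℝ := cprob (sigmaX X) μ A with hπ_def
  have hπ_ce : π = μ[A.indicator (fun _ => (1:ℝ))|sigmaX X] := rfl
  have hπ_sm : StronglyMeasurable[sigmaX X] π := by
    rw [hπ_ce]; exact stronglyMeasurable_condExp
  have hπ_meas : Measurable π := (hπ_sm.measurable).mono hm le_rfl
  have hπ0 : ∀ᵐ ω ∂μ, 0 ≤ π ω := by
    rw [hπ_ce]
    exact condExp_nonneg (Filter.Eventually.of_forall fun ω =>
      Set.indicator_nonneg (fun _ _ => zero_le_one) ω)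
  have hπ1 : ∀ᵐ ω ∂μ, π ω ≤ 1 := by
    have h := condExp_mono (m := sigmaX X) (μ := μ) ((integrable_const (1:ℝ)).indicator hAm)
      (integrable_const (1:ℝ))
      (Filter.Eventually.of_forall (fun ω => by
        by_cases hω : ω ∈ A
        · simp [Set.indicator_of_mem hω]
        · simp [Set.indicator_of_notMem hω]))
    rw [condExp_const hm] at h
    rw [hπ_ce]
    exact h
  -- the main set-level computation
  have hmain : ∀ (S : Set Ω), MeasurableSet[sigmaX X] S → ∀ (u : Set (ℝ × ℝ)), MeasurableSet u →
      (μ (S ∩ G ⁻¹' u ∩ A)).toReal = ∫ ω in S ∩ G ⁻¹' u, π ω ∂μ := by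
    intro S hSm u hU
    set U : Set Ω := G ⁻¹' u with hU_def
    have hUm : MeasurableSet U := hG hU
    have hSm0 : MeasurableSet S := hm _ hSm
    calc (μ (S ∩ U ∩ A)).toReal
        = ∫ ω in S, (A ∩ U).indicator (fun _ => (1:ℝ)) ω ∂μ := by
          rw [setIntegral_indicator (hAm.inter hUm), setIntegral_const, smul_eq_mul, mul_one, measureReal_def]
          congr 2
          rw [Set.inter_assoc, Set.inter_comm U A]
      _ = ∫ ω in S, (μ[(A ∩ U).indicator (fun _ => (1:ℝ))|sigmaX X]) ω ∂μ :=
          (setIntegral_condExp hm ((integrable_const (1:ℝ)).indicator (hAm.inter hUm)) hSm).symm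
      _ = ∫ ω in S, π ω * (μ[U.indicator (fun _ => (1:ℝ))|sigmaX X]) ω ∂μ := by
          refine setIntegral_congr_ae hSm0 ?_
          have h2 := hCI {t} u (measurableSet_singleton t) hU
          have hTA : T ⁻¹' {t} = A := rfl
          rw [hTA] at h2
          filter_upwards [h2] with ω hω _
          exact hω
      _ = ∫ ω, (S.indicator (fun _ => (1:ℝ)) ω * π ω)
            * (μ[U.indicator (fun _ => (1:ℝ))|sigmaX X]) ω ∂μ := by
          rw [← integral_indicator hSm0]
          congr 1; funext ω; by_cases hωS : ω ∈ S <;> simp [hωS]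
      _ = ∫ ω, (S.indicator (fun _ => (1:ℝ)) ω * π ω) * U.indicator (fun _ => (1:ℝ)) ω ∂μ := by
          refine (integral_mul_condexp hm μ (c := 1)
            ((stronglyMeasurable_const.indicator hSm).mul
              (by rw [hπ_ce]; exact stronglyMeasurable_condExp)) ?_
            ((integrable_const (1:ℝ)).indicator hUm)).symm
          filter_upwards [hπ0, hπ1] with ω h0 h1
          simp only [Pi.mul_apply]
          by_cases hωS : ω ∈ S
          · rw [Set.indicator_of_mem hωS, one_mul, abs_le]
            constructor <;> linarith
          · simp [Set.indicator_of_notMem hωS]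
      _ = ∫ ω in S ∩ U, π ω ∂μ := by
          rw [← setIntegral_indicator hUm, ← integral_indicator hSm0]
          congr 1; funext ω
          by_cases hωS : ω ∈ S <;> by_cases hωU : ω ∈ U <;> simp [hωS, hωU]
  have hWm : Measurable (fun ω => (X ω, G ω)) := hX.prodMk hG
  have hrect : ∀ u1 : Set 𝒳, MeasurableSet u1 → ∀ u2 : Set (ℝ × ℝ), MeasurableSet u2 →
      ((μ.restrict A).map (fun ω => (X ω, G ω))) (u1 ×ˢ u2)
      = ((μ.withDensity (fun ω => ENNReal.ofReal (π ω))).map (fun ω => (X ω, G ω))) (u1 ×ˢ u2) := by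
    intro u1 hu1 u2 hu2
    rw [Measure.map_apply hWm (hu1.prod hu2), Measure.map_apply hWm (hu1.prod hu2),
      Measure.restrict_apply (hWm (hu1.prod hu2)), withDensity_apply _ (hWm (hu1.prod hu2))]
    have hpre : (fun ω => (X ω, G ω)) ⁻¹' (u1 ×ˢ u2) = (X ⁻¹' u1) ∩ (G ⁻¹' u2) :=
      Set.mk_preimage_prod X G
    rw [hpre]
    have hSm : MeasurableSet[sigmaX X] (X ⁻¹' u1) := ⟨u1, hu1, rfl⟩
    have hreal := hmain (X ⁻¹' u1) hSm u2 hu2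
    have hfin1 : μ (X ⁻¹' u1 ∩ G ⁻¹' u2 ∩ A) ≠ ⊤ := measure_ne_top _ _
    have hfin2 : ∫⁻ ω in X ⁻¹' u1 ∩ G ⁻¹' u2, ENNReal.ofReal (π ω) ∂μ ≠ ⊤ := by
      have hle : ∫⁻ ω in X ⁻¹' u1 ∩ G ⁻¹' u2, ENNReal.ofReal (π ω) ∂μ
          ≤ ∫⁻ _ω in X ⁻¹' u1 ∩ G ⁻¹' u2, 1 ∂μ := by
        refine lintegral_mono_ae (ae_restrict_of_ae (hπ1.mono fun ω h => ?_))
        exact ENNReal.ofReal_le_one.mpr h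
      rw [setLIntegral_one] at hle
      exact (lt_of_le_of_lt hle (measure_lt_top _ _)).ne
    refine ((ENNReal.toReal_eq_toReal_iff' hfin1 hfin2).mp ?_)
    rw [hreal, integral_eq_lintegral_of_nonneg_ae (ae_restrict_of_ae hπ0)
      (hπ_meas.aestronglyMeasurable)]
  have hν : (μ.restrict A).map (fun ω => (X ω, G ω))
      = (μ.withDensity (fun ω => ENNReal.ofReal (π ω))).map (fun ω => (X ω, G ω)) := by
    refine ext_of_generate_finite _ generateFrom_prod.symm isPiSystem_prod ?_ ?_
    · rintro s ⟨u1, hu1, u2, hu2, rfl⟩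
      exact hrect u1 hu1 u2 hu2
    · rw [← Set.univ_prod_univ]
      exact hrect _ MeasurableSet.univ _ MeasurableSet.univ
  have hAind : ∀ ω, (if T ω = t then (1:ℝ) else 0) * Φ (X ω, G ω)
      = A.indicator (fun ω' => Φ (X ω', G ω')) ω := by
    intro ω; by_cases h : T ω = t
    · have hω : ω ∈ A := h
      simp only [if_pos h, one_mul, Set.indicator_of_mem hω]
    · have hω : ω ∉ A := h
      simp only [if_neg h, zero_mul, Set.indicator_of_notMem hω]
  calc ∫ ω, (if T ω = t then (1:ℝ) else 0) * Φ (X ω, G ω) ∂μ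
      = ∫ ω, A.indicator (fun ω' => Φ (X ω', G ω')) ω ∂μ :=
        integral_congr_ae (Filter.Eventually.of_forall hAind)
    _ = ∫ ω in A, Φ (X ω, G ω) ∂μ := integral_indicator hAm
    _ = ∫ p, Φ p ∂((μ.restrict A).map (fun ω => (X ω, G ω))) :=
        (integral_map hWm.aemeasurable hΦ.aestronglyMeasurable).symm
    _ = ∫ p, Φ p ∂((μ.withDensity (fun ω => ENNReal.ofReal (π ω))).map (fun ω => (X ω, G ω))) := by
        rw [hν]
    _ = ∫ ω, Φ (X ω, G ω) ∂(μ.withDensity (fun ω => ENNReal.ofReal (π ω))) :=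
        integral_map hWm.aemeasurable hΦ.aestronglyMeasurable
    _ = ∫ ω, Real.toNNReal (π ω) • Φ (X ω, G ω) ∂μ := by
        rw [show (fun ω => ENNReal.ofReal (π ω))
            = fun ω => (((fun ω' => Real.toNNReal (π ω')) ω : NNReal) : ENNReal) from rfl]
        exact integral_withDensity_eq_integral_smul hπ_meas.real_toNNReal _
    _ = ∫ ω, π ω * Φ (X ω, G ω) ∂μ := by
        refine integral_congr_ae ?_
        filter_upwards [hπ0] with ω h0
        rw [NNReal.smul_def, Real.coe_toNNReal _ h0, smul_eq_mul]

theorem stmt4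
    {Ω 𝒳 : Type*} [MeasurableSpace Ω] [MeasurableSpace 𝒳] [StandardBorelSpace 𝒳]
    (P : Measure Ω) [IsProbabilityMeasure P]
    (X : Ω → 𝒳) (R T Y₁ Y₀ Y : Ω → ℝ) (Yt : ℝ → Ω → ℝ)
    (hX : Measurable X) (hR : Measurable R) (hT : Measurable T)
    (hY₁m : Measurable Y₁) (hY₀m : Measurable Y₀)
    (hRbin : ∀ ω, R ω = 0 ∨ R ω = 1) (hTbin : ∀ ω, T ω = 0 ∨ T ω = 1)
    (hY₁2 : MemLp Y₁ 2 P) (hY₀2 : MemLp Y₀ 2 P)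
    (hY : Y = fun ω => T ω * Y₁ ω + (1 - T ω) * Y₀ ω)
    (hYt1 : Yt 1 = Y₁) (hYt0 : Yt 0 = Y₀)
    (ε : ℝ) (hε : 0 < ε)
    (hlam_pos : 0 < P {ω | R ω = 1}) (hlam_lt : P {ω | R ω = 1} < 1)
    (hlamX : ∀ᵐ ω ∂P, ε ≤ cprob (sigmaX X) P {ω' | R ω' = 1} ω ∧
      cprob (sigmaX X) P {ω' | R ω' = 1} ω ≤ 1 - ε)
    (hpi : ∀ r ∈ ({0, 1} : Set ℝ), ∀ t ∈ ({0, 1} : Set ℝ), ∀ᵐ ω ∂P,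
      ε ≤ cprob (sigmaX X) (ProbabilityTheory.cond P {ω' | R ω' = r}) {ω' | T ω' = t} ω ∧
      cprob (sigmaX X) (ProbabilityTheory.cond P {ω' | R ω' = r}) {ω' | T ω' = t} ω ≤ 1 - ε)
    (hA1 : IndepFun T (fun ω => (Y₁ ω, Y₀ ω, X ω)) (ProbabilityTheory.cond P {ω | R ω = 1}))
    (hA2 : CondIndepFunGiven (sigmaX X) T (fun ω => (Y₁ ω, Y₀ ω))
      (ProbabilityTheory.cond P {ω | R ω = 0}))
    (t : ℝ) (ht : t = 0 ∨ t = 1)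
    (πd : 𝒳 → ℝ) (hπdm : Measurable πd) (hπdr : ∀ x, πd x ∈ Set.Icc ε (1 - ε))
    (τd1 : 𝒳 → ℝ) (hτd1m : Measurable τd1) (hτd1b : ∃ C, ∀ x, |τd1 x| ≤ C)
    (τd0 : 𝒳 → ℝ) (hτd0m : Measurable τd0) (hτd0b : ∃ C, ∀ x, |τd0 x| ≤ C)
    :
    (∫ ω, ((if T ω = t then (1 : ℝ) else 0) * Y ω / (R ω * ((ProbabilityTheory.cond P {ω' | R ω' = 1}) {ω' | T ω' = t}).toReal + (1 - R ω) * πd (X ω))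
      + (1 - (if T ω = t then (1 : ℝ) else 0) / (R ω * ((ProbabilityTheory.cond P {ω' | R ω' = 1}) {ω' | T ω' = t}).toReal + (1 - R ω) * πd (X ω))) * (R ω * τd1 (X ω) + (1 - R ω) * τd0 (X ω))) ∂P) - (∫ ω', Yt t ω' ∂P)
      = ∫ ω, (1 - R ω) * (cprob (sigmaX X) (ProbabilityTheory.cond P {ω' | R ω' = 0}) {ω' | T ω' = t} ω / πd (X ω) - 1)
          * (cexp (sigmaX X) (ProbabilityTheory.cond P {ω' | R ω' = 0}) (Yt t) ω - τd0 (X ω)) ∂P := by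
  classical
  have hm : sigmaX X ≤ _ := measurable_iff_comap_le.mp hX
  -- representation of Yt t
  obtain ⟨ψ, hψm, hψ⟩ : ∃ ψ : ℝ × ℝ → ℝ, Measurable ψ ∧ ∀ ω, Yt t ω = ψ (Y₁ ω, Y₀ ω) := by
    rcases ht with rfl | rfl
    · exact ⟨Prod.snd, measurable_snd, fun ω => by rw [hYt0]⟩
    · exact ⟨Prod.fst, measurable_fst, fun ω => by rw [hYt1]⟩
  have hYtm : Measurable (Yt t) := by
    have h : Yt t = fun ω => ψ (Y₁ ω, Y₀ ω) := funext hψ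
    rw [h]; exact hψm.comp (hY₁m.prodMk hY₀m)
  have hYtint : Integrable (Yt t) P := by
    rcases ht with rfl | rfl
    · rw [hYt0]; exact hY₀2.integrable one_le_two
    · rw [hYt1]; exact hY₁2.integrable one_le_two
  have hYint : Integrable Y P := by
    rw [hY]
    refine Integrable.add ?_ ?_
    · exact (hY₁2.integrable one_le_two).bdd_mul (c := 1) hT.aestronglyMeasurable
        (Filter.Eventually.of_forall fun ω => by rcases hTbin ω with h | h <;> simp [h])
    · exact (hY₀2.integrable one_le_two).bdd_mul (c := 1)
        ((measurable_const.sub hT).aestronglyMeasurable)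
        (Filter.Eventually.of_forall fun ω => by rcases hTbin ω with h | h <;> simp [h])
  -- events
  set A1 : Set Ω := {ω | R ω = 1} with hA1_def
  set A0 : Set Ω := {ω | R ω = 0} with hA0_def
  have hA1m : MeasurableSet A1 := hR (measurableSet_singleton 1)
  have hA0m : MeasurableSet A0 := hR (measurableSet_singleton 0)
  have hA0c : A0 = A1ᶜ := by
    ext ω
    simp only [hA0_def, hA1_def, Set.mem_setOf_eq, Set.mem_compl_iff]
    rcases hRbin ω with h | h <;> simp [h]
  have hlamA1 : P A1 ≠ 0 := hlam_pos.ne'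
  have hlamA0 : P A0 ≠ 0 := by
    rw [hA0c, measure_compl hA1m (measure_ne_top _ _), measure_univ]
    simp only [ne_eq, tsub_eq_zero_iff_le, not_le]
    exact hlam_lt
  set P₁ : Measure Ω := P[|A1] with hP₁_def
  set P₀ : Measure Ω := P[|A0] with hP₀_def
  haveI : IsProbabilityMeasure P₁ := cond_isProbabilityMeasure hlamA1
  haveI : IsProbabilityMeasure P₀ := cond_isProbabilityMeasure hlamA0
  have hcondint : ∀ (s : Set Ω), P s ≠ 0 → ∀ {f : Ω → ℝ}, Integrable f P → Integrable f P[|s] := by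
    intro s hs f hf
    show Integrable f ((P s)⁻¹ • P.restrict s)
    exact (hf.restrict (s := s)).smul_measure (ENNReal.inv_ne_top.mpr hs)
  have hsetint : ∀ (s : Set Ω), P s ≠ 0 → ∀ (f : Ω → ℝ),
      (P s).toReal * ∫ ω, f ω ∂P[|s] = ∫ ω in s, f ω ∂P := by
    intro s hs f
    show (P s).toReal * ∫ ω, f ω ∂((P s)⁻¹ • P.restrict s) = _
    rw [integral_smul_measure, ENNReal.toReal_inv, smul_eq_mul, ← mul_assoc,
      mul_inv_cancel₀ (ENNReal.toReal_ne_zero.mpr ⟨hs, measure_ne_top _ _⟩), one_mul]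
  have hsplit : ∀ (f : Ω → ℝ), Integrable f P →
      ∫ ω, f ω ∂P = (P A1).toReal * ∫ ω, f ω ∂P₁ + (P A0).toReal * ∫ ω, f ω ∂P₀ := by
    intro f hf
    rw [hP₁_def, hP₀_def, hsetint A1 hlamA1 f, hsetint A0 hlamA0 f, hA0c]
    exact (integral_add_compl hA1m hf).symm
  have hYt₁ : Integrable (Yt t) P₁ := by rw [hP₁_def]; exact hcondint A1 hlamA1 hYtint
  have hYt₀ : Integrable (Yt t) P₀ := by rw [hP₀_def]; exact hcondint A0 hlamA0 hYtint
  -- bounds for p₁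
  set p₁ : ℝ := (P₁ {ω' | T ω' = t}).toReal with hp₁_def
  have hTtm : MeasurableSet {ω' | T ω' = t} := hT (measurableSet_singleton t)
  have haTm : Measurable (fun ω => if T ω = t then (1:ℝ) else 0) :=
    Measurable.ite hTtm measurable_const measurable_const
  have haT_ind : (fun ω => if T ω = t then (1:ℝ) else 0)
      = Set.indicator {ω' | T ω' = t} (fun _ => (1:ℝ)) := by
    funext ω
    by_cases h : T ω = t
    · rw [if_pos h]
      exact (Set.indicator_of_mem (show ω ∈ {ω' | T ω' = t} from h) fun _ => (1:ℝ)).symm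
    · rw [if_neg h]
      exact (Set.indicator_of_notMem (show ω ∉ {ω' | T ω' = t} from h) fun _ => (1:ℝ)).symm
  have haT_int : ∫ ω, (if T ω = t then (1:ℝ) else 0) ∂P₁ = p₁ := by
    rw [haT_ind, integral_indicator_const (1:ℝ) hTtm, smul_eq_mul, mul_one, hp₁_def, measureReal_def]
  have habs_aT : ∀ ω, |if T ω = t then (1:ℝ) else 0| ≤ 1 := by
    intro ω; by_cases h : T ω = t <;> simp [h]
  have hεp₁ : ε ≤ p₁ := by
    have hae : ∀ᵐ ω ∂P₁, ε ≤ cprob (sigmaX X) P₁ {ω' | T ω' = t} ω := by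
      refine Filter.Eventually.filter_mono (Measure.AbsolutelyContinuous.ae_le ?_)
        ((hpi 1 (by simp) t (by rcases ht with h|h <;> simp [h])).mono fun ω h => h.1)
      rw [hP₁_def]; exact cond_absolutelyContinuous
    have h2 : ∫ ω, cprob (sigmaX X) P₁ {ω' | T ω' = t} ω ∂P₁ = p₁ := by
      simp only [cprob, cexp]
      rw [integral_condExp hm, integral_indicator_const (1:ℝ) hTtm, smul_eq_mul, mul_one,
        hp₁_def, measureReal_def]
    have h3 : ε ≤ ∫ ω, cprob (sigmaX X) P₁ {ω' | T ω' = t} ω ∂P₁ := by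
      have h4 := integral_mono_ae (integrable_const ε)
        (by simp only [cprob, cexp]; exact integrable_condExp) hae
      simpa using h4
    linarith [h3, h2.le, h2.ge]
  have hp₁pos : 0 < p₁ := lt_of_lt_of_le hε hεp₁
  have hp₁ne : p₁ ≠ 0 := hp₁pos.ne'
  -- pointwise facts
  have hπdpos : ∀ x, 0 < πd x := fun x => lt_of_lt_of_le hε (hπdr x).1
  have haY : ∀ ω, (if T ω = t then (1:ℝ) else 0) * Y ω
      = (if T ω = t then (1:ℝ) else 0) * Yt t ω := by
    intro ω
    by_cases h : T ω = t
    · rcases ht with rfl | rfl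
      · rw [hY, hYt0]; simp [h]
      · rw [hY, hYt1]; simp [h]
    · simp [h]
  have hae1 : ∀ᵐ ω ∂P₁, R ω = 1 := by
    have h : ∀ᵐ ω ∂P₁, ω ∈ A1 := by
      rw [hP₁_def]
      exact Measure.ae_smul_measure (ae_restrict_mem hA1m) _
    exact h.mono fun ω hω => hω
  have hae0 : ∀ᵐ ω ∂P₀, R ω = 0 := by
    have h : ∀ᵐ ω ∂P₀, ω ∈ A0 := by
      rw [hP₀_def]
      exact Measure.ae_smul_measure (ae_restrict_mem hA0m) _
    exact h.mono fun ω hω => hω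
  -- independence consequences on P₁
  obtain ⟨C1, hC1⟩ := hτd1b
  obtain ⟨C0, hC0⟩ := hτd0b
  have hτd1X₁ : Integrable (fun ω => τd1 (X ω)) P₁ :=
    Integrable.mono' (integrable_const C1) (hτd1m.comp hX).aestronglyMeasurable
      (Filter.Eventually.of_forall fun ω => by simpa [Real.norm_eq_abs] using hC1 (X ω))
  have hτd0X₀ : Integrable (fun ω => τd0 (X ω)) P₀ :=
    Integrable.mono' (integrable_const C0) (hτd0m.comp hX).aestronglyMeasurable
      (Filter.Eventually.of_forall fun ω => by simpa [Real.norm_eq_abs] using hC0 (X ω))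
  have haT_norm : ∀ᵐ ω ∂P₁, ‖if T ω = t then (1:ℝ) else 0‖ ≤ 1 :=
    Filter.Eventually.of_forall fun ω => by simpa [Real.norm_eq_abs] using habs_aT ω
  have IaYt₁ : Integrable (fun ω => (if T ω = t then (1:ℝ) else 0) * Yt t ω) P₁ :=
    hYt₁.bdd_mul haTm.aestronglyMeasurable haT_norm
  have Iaτ₁ : Integrable (fun ω => (if T ω = t then (1:ℝ) else 0) * τd1 (X ω)) P₁ :=
    hτd1X₁.bdd_mul haTm.aestronglyMeasurable haT_norm
  have hφm : Measurable (fun x : ℝ => if x = t then (1:ℝ) else 0) :=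
    Measurable.ite measurableSet_eq measurable_const measurable_const
  have hIndYt : IndepFun (fun ω => if T ω = t then (1:ℝ) else 0) (Yt t) P₁ := by
    have hψ3m : Measurable (fun p : ℝ × ℝ × 𝒳 => ψ (p.1, p.2.1)) :=
      hψm.comp (measurable_fst.prodMk (measurable_fst.comp measurable_snd))
    have h := hA1.comp hφm hψ3m
    have e2 : (fun p : ℝ × ℝ × 𝒳 => ψ (p.1, p.2.1)) ∘ (fun ω => (Y₁ ω, Y₀ ω, X ω)) = Yt t := by
      funext ω; exact (hψ ω).symm
    rw [e2] at h
    exact h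
  have hIndτ : IndepFun (fun ω => if T ω = t then (1:ℝ) else 0) (fun ω => τd1 (X ω)) P₁ := by
    have h := hA1.comp hφm (show Measurable (fun p : ℝ × ℝ × 𝒳 => τd1 p.2.2) from
      hτd1m.comp (measurable_snd.comp measurable_snd))
    exact h
  have hmul1 : ∫ ω, (if T ω = t then (1:ℝ) else 0) * Yt t ω ∂P₁ = p₁ * ∫ ω, Yt t ω ∂P₁ := by
    have h := hIndYt.integral_mul_eq_mul_integral haTm.aestronglyMeasurable hYtm.aestronglyMeasurable
    rw [show ((fun ω => if T ω = t then (1:ℝ) else 0) * Yt t)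
        = fun ω => (if T ω = t then (1:ℝ) else 0) * Yt t ω from rfl] at h
    rw [h, haT_int]
  have hmul2 : ∫ ω, (if T ω = t then (1:ℝ) else 0) * τd1 (X ω) ∂P₁
      = p₁ * ∫ ω, τd1 (X ω) ∂P₁ := by
    have h := hIndτ.integral_mul_eq_mul_integral haTm.aestronglyMeasurable (hτd1m.comp hX).aestronglyMeasurable
    rw [show ((fun ω => if T ω = t then (1:ℝ) else 0) * fun ω => τd1 (X ω))
        = fun ω => (if T ω = t then (1:ℝ) else 0) * τd1 (X ω) from rfl] at h
    rw [h, haT_int]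
  have hIntP₁ : ∫ ω, ((if T ω = t then (1:ℝ) else 0) * Y ω / (R ω * p₁ + (1 - R ω) * πd (X ω))
      + (1 - (if T ω = t then (1:ℝ) else 0) / (R ω * p₁ + (1 - R ω) * πd (X ω)))
        * (R ω * τd1 (X ω) + (1 - R ω) * τd0 (X ω))) ∂P₁ = ∫ ω, Yt t ω ∂P₁ := by
    have hcongr : ∀ᵐ ω ∂P₁, ((if T ω = t then (1:ℝ) else 0) * Y ω / (R ω * p₁ + (1 - R ω) * πd (X ω))
        + (1 - (if T ω = t then (1:ℝ) else 0) / (R ω * p₁ + (1 - R ω) * πd (X ω)))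
          * (R ω * τd1 (X ω) + (1 - R ω) * τd0 (X ω)))
        = p₁⁻¹ * ((if T ω = t then (1:ℝ) else 0) * Yt t ω)
          + (τd1 (X ω) - p₁⁻¹ * ((if T ω = t then (1:ℝ) else 0) * τd1 (X ω))) := by
      filter_upwards [hae1] with ω hω
      rw [haY ω, hω]
      simp only [one_mul, sub_self, zero_mul, add_zero]
      rw [div_eq_mul_inv, div_eq_mul_inv]
      ring
    have e1 : ∫ ω, (p₁⁻¹ * ((if T ω = t then (1:ℝ) else 0) * Yt t ω)
        + (τd1 (X ω) - p₁⁻¹ * ((if T ω = t then (1:ℝ) else 0) * τd1 (X ω)))) ∂P₁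
        = (∫ ω, p₁⁻¹ * ((if T ω = t then (1:ℝ) else 0) * Yt t ω) ∂P₁)
          + ∫ ω, (τd1 (X ω) - p₁⁻¹ * ((if T ω = t then (1:ℝ) else 0) * τd1 (X ω))) ∂P₁ :=
      integral_add (IaYt₁.const_mul _) (hτd1X₁.sub (Iaτ₁.const_mul _))
    have e2 : ∫ ω, (τd1 (X ω) - p₁⁻¹ * ((if T ω = t then (1:ℝ) else 0) * τd1 (X ω))) ∂P₁
        = (∫ ω, τd1 (X ω) ∂P₁)
          - ∫ ω, p₁⁻¹ * ((if T ω = t then (1:ℝ) else 0) * τd1 (X ω)) ∂P₁ :=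
      integral_sub hτd1X₁ (Iaτ₁.const_mul _)
    have e3 : ∫ ω, p₁⁻¹ * ((if T ω = t then (1:ℝ) else 0) * Yt t ω) ∂P₁
        = p₁⁻¹ * ∫ ω, (if T ω = t then (1:ℝ) else 0) * Yt t ω ∂P₁ := integral_const_mul _ _
    have e4 : ∫ ω, p₁⁻¹ * ((if T ω = t then (1:ℝ) else 0) * τd1 (X ω)) ∂P₁
        = p₁⁻¹ * ∫ ω, (if T ω = t then (1:ℝ) else 0) * τd1 (X ω) ∂P₁ := integral_const_mul _ _
    rw [integral_congr_ae hcongr, e1, e2, e3, e4, hmul1, hmul2,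
      inv_mul_cancel_left₀ hp₁ne, inv_mul_cancel_left₀ hp₁ne]
    ring
  -- analysis on P₀
  have hπdXm : Measurable (fun ω => πd (X ω)) := hπdm.comp hX
  have hG : Measurable (fun ω => (Y₁ ω, Y₀ ω)) := hY₁m.prodMk hY₀m
  have hbd_aPi : ∀ ω, |(if T ω = t then (1:ℝ) else 0) / πd (X ω)| ≤ ε⁻¹ := by
    intro ω
    rw [abs_div, abs_of_pos (hπdpos (X ω)), ← one_div]
    exact div_le_div₀ zero_le_one (habs_aT ω) hε (hπdr (X ω)).1
  have IaYt₀ : Integrable (fun ω => (if T ω = t then (1:ℝ) else 0) * Yt t ω / πd (X ω)) P₀ := by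
    have h := hYt₀.bdd_mul (c := ε⁻¹) ((haTm.div hπdXm).aestronglyMeasurable)
      (Filter.Eventually.of_forall fun ω => by rw [Real.norm_eq_abs]; exact hbd_aPi ω)
    refine h.congr (Filter.Eventually.of_forall fun ω => ?_)
    beta_reduce
    simp only [Pi.div_apply]
    rw [div_eq_mul_inv, div_eq_mul_inv]; ring
  have Iaτ₀ : Integrable (fun ω => (if T ω = t then (1:ℝ) else 0) * τd0 (X ω) / πd (X ω)) P₀ := by
    have h := hτd0X₀.bdd_mul (c := ε⁻¹) ((haTm.div hπdXm).aestronglyMeasurable)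
      (Filter.Eventually.of_forall fun ω => by rw [Real.norm_eq_abs]; exact hbd_aPi ω)
    refine h.congr (Filter.Eventually.of_forall fun ω => ?_)
    beta_reduce
    simp only [Pi.div_apply]
    rw [div_eq_mul_inv, div_eq_mul_inv]; ring
  have hIntP₀ : ∫ ω, ((if T ω = t then (1:ℝ) else 0) * Y ω / (R ω * p₁ + (1 - R ω) * πd (X ω))
      + (1 - (if T ω = t then (1:ℝ) else 0) / (R ω * p₁ + (1 - R ω) * πd (X ω)))
        * (R ω * τd1 (X ω) + (1 - R ω) * τd0 (X ω))) ∂P₀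
      = (∫ ω, (if T ω = t then (1:ℝ) else 0) * Yt t ω / πd (X ω) ∂P₀)
        + ((∫ ω, τd0 (X ω) ∂P₀)
          - ∫ ω, (if T ω = t then (1:ℝ) else 0) * τd0 (X ω) / πd (X ω) ∂P₀) := by
    have hcongr : ∀ᵐ ω ∂P₀, ((if T ω = t then (1:ℝ) else 0) * Y ω / (R ω * p₁ + (1 - R ω) * πd (X ω))
        + (1 - (if T ω = t then (1:ℝ) else 0) / (R ω * p₁ + (1 - R ω) * πd (X ω)))
          * (R ω * τd1 (X ω) + (1 - R ω) * τd0 (X ω)))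
        = (if T ω = t then (1:ℝ) else 0) * Yt t ω / πd (X ω)
          + (τd0 (X ω) - (if T ω = t then (1:ℝ) else 0) * τd0 (X ω) / πd (X ω)) := by
      filter_upwards [hae0] with ω hω
      rw [haY ω, hω]
      simp only [zero_mul, zero_add, sub_zero, one_mul]
      rw [div_eq_mul_inv, div_eq_mul_inv, div_eq_mul_inv]
      ring
    have e1 : ∫ ω, ((if T ω = t then (1:ℝ) else 0) * Yt t ω / πd (X ω)
        + (τd0 (X ω) - (if T ω = t then (1:ℝ) else 0) * τd0 (X ω) / πd (X ω))) ∂P₀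
        = (∫ ω, (if T ω = t then (1:ℝ) else 0) * Yt t ω / πd (X ω) ∂P₀)
          + ∫ ω, (τd0 (X ω) - (if T ω = t then (1:ℝ) else 0) * τd0 (X ω) / πd (X ω)) ∂P₀ :=
      integral_add IaYt₀ (hτd0X₀.sub Iaτ₀)
    have e2 : ∫ ω, (τd0 (X ω) - (if T ω = t then (1:ℝ) else 0) * τd0 (X ω) / πd (X ω)) ∂P₀
        = (∫ ω, τd0 (X ω) ∂P₀)
          - ∫ ω, (if T ω = t then (1:ℝ) else 0) * τd0 (X ω) / πd (X ω) ∂P₀ :=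
      integral_sub hτd0X₀ Iaτ₀
    rw [integral_congr_ae hcongr, e1, e2]
  -- key conditional-independence lemma applications
  have hK1 : ∫ ω, (if T ω = t then (1:ℝ) else 0) * Yt t ω / πd (X ω) ∂P₀
      = ∫ ω, cprob (sigmaX X) P₀ {ω' | T ω' = t} ω * Yt t ω / πd (X ω) ∂P₀ := by
    have h := key_condIndep P₀ X hX T hT _ hG hA2 t (fun p => ψ p.2 / πd p.1)
      ((hψm.comp measurable_snd).div (hπdm.comp measurable_fst))
    calc ∫ ω, (if T ω = t then (1:ℝ) else 0) * Yt t ω / πd (X ω) ∂P₀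
        = ∫ ω, (if T ω = t then (1:ℝ) else 0) * (ψ (Y₁ ω, Y₀ ω) / πd (X ω)) ∂P₀ := by
          refine integral_congr_ae (Filter.Eventually.of_forall fun ω => ?_)
          simp only [hψ]; ring
      _ = ∫ ω, cprob (sigmaX X) P₀ {ω' | T ω' = t} ω * (ψ (Y₁ ω, Y₀ ω) / πd (X ω)) ∂P₀ := h
      _ = ∫ ω, cprob (sigmaX X) P₀ {ω' | T ω' = t} ω * Yt t ω / πd (X ω) ∂P₀ := by
          refine integral_congr_ae (Filter.Eventually.of_forall fun ω => ?_)
          simp only [hψ]; ring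
  have hK3 : ∫ ω, (if T ω = t then (1:ℝ) else 0) * τd0 (X ω) / πd (X ω) ∂P₀
      = ∫ ω, cprob (sigmaX X) P₀ {ω' | T ω' = t} ω / πd (X ω) * τd0 (X ω) ∂P₀ := by
    have h := key_condIndep P₀ X hX T hT _ hG hA2 t (fun p => τd0 p.1 / πd p.1)
      ((hτd0m.comp measurable_fst).div (hπdm.comp measurable_fst))
    calc ∫ ω, (if T ω = t then (1:ℝ) else 0) * τd0 (X ω) / πd (X ω) ∂P₀
        = ∫ ω, (if T ω = t then (1:ℝ) else 0) * (τd0 (X ω) / πd (X ω)) ∂P₀ := by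
          refine integral_congr_ae (Filter.Eventually.of_forall fun ω => ?_)
          ring
      _ = ∫ ω, cprob (sigmaX X) P₀ {ω' | T ω' = t} ω * (τd0 (X ω) / πd (X ω)) ∂P₀ := h
      _ = ∫ ω, cprob (sigmaX X) P₀ {ω' | T ω' = t} ω / πd (X ω) * τd0 (X ω) ∂P₀ := by
          refine integral_congr_ae (Filter.Eventually.of_forall fun ω => ?_)
          ring
  -- bounds on the conditional probability under P₀
  have hπ₀0 : ∀ᵐ ω ∂P₀, 0 ≤ cprob (sigmaX X) P₀ {ω' | T ω' = t} ω := by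
    simp only [cprob, cexp]
    exact condExp_nonneg (Filter.Eventually.of_forall fun ω =>
      Set.indicator_nonneg (fun _ _ => zero_le_one) ω)
  have hπ₀1 : ∀ᵐ ω ∂P₀, cprob (sigmaX X) P₀ {ω' | T ω' = t} ω ≤ 1 := by
    have h := condExp_mono (m := sigmaX X) (μ := P₀)
      ((integrable_const (1:ℝ)).indicator hTtm) (integrable_const (1:ℝ))
      (Filter.Eventually.of_forall (fun ω => by
        by_cases hω : ω ∈ {ω' | T ω' = t}
        · simp [Set.indicator_of_mem hω]
        · simp [Set.indicator_of_notMem hω]))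
    rw [condExp_const hm] at h
    simp only [cprob, cexp]
    exact h
  have hb_sm : StronglyMeasurable[sigmaX X]
      (fun ω => cprob (sigmaX X) P₀ {ω' | T ω' = t} ω / πd (X ω)) := by
    refine Measurable.stronglyMeasurable (Measurable.div ?_ ?_)
    · exact ((stronglyMeasurable_condExp :
        StronglyMeasurable[sigmaX X] (P₀[{ω' | T ω' = t}.indicator (fun _ => (1:ℝ))|sigmaX X]))).measurable
    · exact hπdm.comp (fun s hs => ⟨s, hs, rfl⟩ : Measurable[sigmaX X] X)
  have hb_bd : ∀ᵐ ω ∂P₀, |cprob (sigmaX X) P₀ {ω' | T ω' = t} ω / πd (X ω)| ≤ ε⁻¹ := by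
    filter_upwards [hπ₀0, hπ₀1] with ω h0 h1
    rw [abs_div, abs_of_pos (hπdpos (X ω)), ← one_div]
    exact div_le_div₀ zero_le_one (abs_le.mpr ⟨by linarith, h1⟩) hε (hπdr (X ω)).1
  have hb_norm : ∀ᵐ ω ∂P₀, ‖cprob (sigmaX X) P₀ {ω' | T ω' = t} ω / πd (X ω)‖ ≤ ε⁻¹ := by
    filter_upwards [hb_bd] with ω h
    rw [Real.norm_eq_abs]
    exact h
  have hpull : ∫ ω, cprob (sigmaX X) P₀ {ω' | T ω' = t} ω * Yt t ω / πd (X ω) ∂P₀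
      = ∫ ω, cprob (sigmaX X) P₀ {ω' | T ω' = t} ω / πd (X ω)
          * cexp (sigmaX X) P₀ (Yt t) ω ∂P₀ := by
    have h := integral_mul_condexp hm P₀ hb_sm hb_bd hYt₀
    calc ∫ ω, cprob (sigmaX X) P₀ {ω' | T ω' = t} ω * Yt t ω / πd (X ω) ∂P₀
        = ∫ ω, cprob (sigmaX X) P₀ {ω' | T ω' = t} ω / πd (X ω) * Yt t ω ∂P₀ := by
          refine integral_congr_ae (Filter.Eventually.of_forall fun ω => ?_)
          ring
      _ = ∫ ω, cprob (sigmaX X) P₀ {ω' | T ω' = t} ω / πd (X ω)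
            * cexp (sigmaX X) P₀ (Yt t) ω ∂P₀ := h
  have hJ4 : ∫ ω, Yt t ω ∂P₀ = ∫ ω, cexp (sigmaX X) P₀ (Yt t) ω ∂P₀ := by
    simp only [cexp]
    exact (integral_condExp hm).symm
  -- integrability for the RHS expansion
  have hτ₀int : Integrable (fun ω => cexp (sigmaX X) P₀ (Yt t) ω) P₀ := by
    simp only [cexp]; exact integrable_condExp
  have Ibτ₀ : Integrable (fun ω => cprob (sigmaX X) P₀ {ω' | T ω' = t} ω / πd (X ω)
      * cexp (sigmaX X) P₀ (Yt t) ω) P₀ :=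
    hτ₀int.bdd_mul ((hb_sm.mono hm).aestronglyMeasurable) hb_norm
  have Ibτd0 : Integrable (fun ω => cprob (sigmaX X) P₀ {ω' | T ω' = t} ω / πd (X ω)
      * τd0 (X ω)) P₀ :=
    hτd0X₀.bdd_mul ((hb_sm.mono hm).aestronglyMeasurable) hb_norm
  -- the right-hand side
  have hRHS : ∫ ω, (1 - R ω) * (cprob (sigmaX X) P₀ {ω' | T ω' = t} ω / πd (X ω) - 1)
        * (cexp (sigmaX X) P₀ (Yt t) ω - τd0 (X ω)) ∂P
      = (P A0).toReal * (((∫ ω, cprob (sigmaX X) P₀ {ω' | T ω' = t} ω / πd (X ω)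
            * cexp (sigmaX X) P₀ (Yt t) ω ∂P₀)
          - ∫ ω, cprob (sigmaX X) P₀ {ω' | T ω' = t} ω / πd (X ω) * τd0 (X ω) ∂P₀)
        - ((∫ ω, cexp (sigmaX X) P₀ (Yt t) ω ∂P₀) - ∫ ω, τd0 (X ω) ∂P₀)) := by
    have h1 : ∀ ω, (1 - R ω) * (cprob (sigmaX X) P₀ {ω' | T ω' = t} ω / πd (X ω) - 1)
        * (cexp (sigmaX X) P₀ (Yt t) ω - τd0 (X ω))
        = A0.indicator (fun ω' => (cprob (sigmaX X) P₀ {ω' | T ω' = t} ω' / πd (X ω') - 1)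
          * (cexp (sigmaX X) P₀ (Yt t) ω' - τd0 (X ω'))) ω := by
      intro ω
      rcases hRbin ω with h | h
      · rw [Set.indicator_of_mem (show ω ∈ A0 from h), h]; ring
      · rw [Set.indicator_of_notMem (show ω ∉ A0 from by
          intro hh; rw [show R ω = 0 from hh] at h; norm_num at h), h]
        ring
    rw [integral_congr_ae (Filter.Eventually.of_forall h1), integral_indicator hA0m,
      ← hsetint A0 hlamA0 (fun ω' => (cprob (sigmaX X) P₀ {ω' | T ω' = t} ω' / πd (X ω') - 1)
          * (cexp (sigmaX X) P₀ (Yt t) ω' - τd0 (X ω'))), ← hP₀_def]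
    congr 1
    have hcongr2 : ∀ᵐ ω ∂P₀, (cprob (sigmaX X) P₀ {ω' | T ω' = t} ω / πd (X ω) - 1)
        * (cexp (sigmaX X) P₀ (Yt t) ω - τd0 (X ω))
        = (cprob (sigmaX X) P₀ {ω' | T ω' = t} ω / πd (X ω) * cexp (sigmaX X) P₀ (Yt t) ω
            - cprob (sigmaX X) P₀ {ω' | T ω' = t} ω / πd (X ω) * τd0 (X ω))
          - (cexp (sigmaX X) P₀ (Yt t) ω - τd0 (X ω)) := by
      refine Filter.Eventually.of_forall fun ω => ?_
      ring
    have e1 : ∫ ω, ((cprob (sigmaX X) P₀ {ω' | T ω' = t} ω / πd (X ω) * cexp (sigmaX X) P₀ (Yt t) ω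
            - cprob (sigmaX X) P₀ {ω' | T ω' = t} ω / πd (X ω) * τd0 (X ω))
          - (cexp (sigmaX X) P₀ (Yt t) ω - τd0 (X ω))) ∂P₀
        = (∫ ω, (cprob (sigmaX X) P₀ {ω' | T ω' = t} ω / πd (X ω) * cexp (sigmaX X) P₀ (Yt t) ω
            - cprob (sigmaX X) P₀ {ω' | T ω' = t} ω / πd (X ω) * τd0 (X ω)) ∂P₀)
          - ∫ ω, (cexp (sigmaX X) P₀ (Yt t) ω - τd0 (X ω)) ∂P₀ :=
      integral_sub (Ibτ₀.sub Ibτd0) (hτ₀int.sub hτd0X₀)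
    have e2 : ∫ ω, (cprob (sigmaX X) P₀ {ω' | T ω' = t} ω / πd (X ω) * cexp (sigmaX X) P₀ (Yt t) ω
            - cprob (sigmaX X) P₀ {ω' | T ω' = t} ω / πd (X ω) * τd0 (X ω)) ∂P₀
        = (∫ ω, cprob (sigmaX X) P₀ {ω' | T ω' = t} ω / πd (X ω)
              * cexp (sigmaX X) P₀ (Yt t) ω ∂P₀)
          - ∫ ω, cprob (sigmaX X) P₀ {ω' | T ω' = t} ω / πd (X ω) * τd0 (X ω) ∂P₀ :=
      integral_sub Ibτ₀ Ibτd0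
    have e3 : ∫ ω, (cexp (sigmaX X) P₀ (Yt t) ω - τd0 (X ω)) ∂P₀
        = (∫ ω, cexp (sigmaX X) P₀ (Yt t) ω ∂P₀) - ∫ ω, τd0 (X ω) ∂P₀ :=
      integral_sub hτ₀int hτd0X₀
    rw [integral_congr_ae hcongr2, e1, e2, e3]
  -- integrability of the big integrand under P
  have hπthm : Measurable (fun ω => R ω * p₁ + (1 - R ω) * πd (X ω)) :=
    (hR.mul measurable_const).add ((measurable_const.sub hR).mul hπdXm)
  have hπtε : ∀ ω, ε ≤ R ω * p₁ + (1 - R ω) * πd (X ω) := by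
    intro ω
    rcases hRbin ω with h | h <;> rw [h]
    · simpa using (hπdr (X ω)).1
    · simpa using hεp₁
  have hπtpos : ∀ ω, 0 < R ω * p₁ + (1 - R ω) * πd (X ω) :=
    fun ω => lt_of_lt_of_le hε (hπtε ω)
  have hbd_aPit : ∀ ω, |(if T ω = t then (1:ℝ) else 0)
      / (R ω * p₁ + (1 - R ω) * πd (X ω))| ≤ ε⁻¹ := by
    intro ω
    rw [abs_div, abs_of_pos (hπtpos ω), ← one_div]
    exact div_le_div₀ zero_le_one (habs_aT ω) hε (hπtε ω)
  have hBIGint : Integrable (fun ω =>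
      (if T ω = t then (1:ℝ) else 0) * Y ω / (R ω * p₁ + (1 - R ω) * πd (X ω))
      + (1 - (if T ω = t then (1:ℝ) else 0) / (R ω * p₁ + (1 - R ω) * πd (X ω)))
        * (R ω * τd1 (X ω) + (1 - R ω) * τd0 (X ω))) P := by
    refine Integrable.add ?_ ?_
    · have h := hYint.bdd_mul (c := ε⁻¹) ((haTm.div hπthm).aestronglyMeasurable)
        (Filter.Eventually.of_forall fun ω => by rw [Real.norm_eq_abs]; exact hbd_aPit ω)
      refine h.congr (Filter.Eventually.of_forall fun ω => ?_)
      beta_reduce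
      simp only [Pi.div_apply]
      rw [div_eq_mul_inv, div_eq_mul_inv]; ring
    · refine Integrable.mono' (integrable_const ((1 + ε⁻¹) * (C1 + C0)))
        (((measurable_const.sub (haTm.div hπthm)).mul
          ((hR.mul (hτd1m.comp hX)).add ((measurable_const.sub hR).mul
            (hτd0m.comp hX)))).aestronglyMeasurable)
        (Filter.Eventually.of_forall fun ω => ?_)
      rw [Real.norm_eq_abs, abs_mul]
      have h2 : |R ω * τd1 (X ω) + (1 - R ω) * τd0 (X ω)| ≤ C1 + C0 := by
        have hc1 : (0:ℝ) ≤ C1 := le_trans (abs_nonneg _) (hC1 (X ω))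
        have hc0 : (0:ℝ) ≤ C0 := le_trans (abs_nonneg _) (hC0 (X ω))
        rcases hRbin ω with h | h <;> rw [h] <;> simp
        · linarith [hC0 (X ω)]
        · linarith [hC1 (X ω)]
      have h3 : |1 - (if T ω = t then (1:ℝ) else 0)
          / (R ω * p₁ + (1 - R ω) * πd (X ω))| ≤ 1 + ε⁻¹ := by
        refine le_trans (abs_sub _ _) ?_
        simp only [abs_one]
        exact add_le_add le_rfl (hbd_aPit ω)
      exact mul_le_mul h3 h2 (abs_nonneg _) (by positivity)
  -- final assembly
  have hL : ∫ ω, ((if T ω = t then (1:ℝ) else 0) * Y ω / (R ω * p₁ + (1 - R ω) * πd (X ω))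
      + (1 - (if T ω = t then (1:ℝ) else 0) / (R ω * p₁ + (1 - R ω) * πd (X ω)))
        * (R ω * τd1 (X ω) + (1 - R ω) * τd0 (X ω))) ∂P
      = (P A1).toReal * (∫ ω, Yt t ω ∂P₁)
        + (P A0).toReal * ((∫ ω, (if T ω = t then (1:ℝ) else 0) * Yt t ω / πd (X ω) ∂P₀)
          + ((∫ ω, τd0 (X ω) ∂P₀)
            - ∫ ω, (if T ω = t then (1:ℝ) else 0) * τd0 (X ω) / πd (X ω) ∂P₀)) := by
    rw [hsplit _ hBIGint, hIntP₁, hIntP₀]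
  have hMu : ∫ ω', Yt t ω' ∂P
      = (P A1).toReal * ∫ ω, Yt t ω ∂P₁ + (P A0).toReal * ∫ ω, Yt t ω ∂P₀ :=
    hsplit _ hYtint
  rw [hL, hMu, hRHS, hK1, hpull, hK3, hJ4]
  ring
end
end

section
/- Assume (A1) and (A3). Then for each t ∈ {0,1}, the mean potential outcome is identified using randomized-trial outcome data only: μ_t = E[ R·1{T=t}·Y / (λ₁(X)·π_{t1}) ] and μ_t = E[ τ_t(1,X) ]; moreover τ_t(1,X) = E[Y | T=t, R=1, X] almost surely. -/
open MeasureTheory ProbabilityTheory Set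

noncomputable section

section aux
variable {Ω : Type*}

lemma aux_setIntegral_cond {m0 : MeasurableSpace Ω} (μ : Measure Ω) {S A : Set Ω}
    (hS : MeasurableSet S) (hA : MeasurableSet A) (u : Ω → ℝ) :
    ∫ ω in A, u ω ∂(μ[|S]) = (μ S).toReal⁻¹ * ∫ ω in A ∩ S, u ω ∂μ := by
  simp only [ProbabilityTheory.cond, Measure.restrict_smul, integral_smul_measure,
    Measure.restrict_restrict hA, ENNReal.toReal_inv, smul_eq_mul]

lemma aux_ind_bd (S : Set Ω) (ω : Ω) :
    ‖S.indicator (fun _ => (1:ℝ)) ω‖ ≤ 1 := by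
  by_cases h : ω ∈ S <;> simp [h]

lemma aux_pull_out {m m0 : MeasurableSpace Ω} (hm : m ≤ m0) (μ : Measure Ω) [IsFiniteMeasure μ]
    {w u : Ω → ℝ} (hw : StronglyMeasurable[m] w) (hu : Integrable u μ)
    (hwu : Integrable (fun ω => w ω * u ω) μ) :
    ∫ ω, w ω * u ω ∂μ = ∫ ω, w ω * (μ[u|m]) ω ∂μ := by
  have h : μ[(fun ω => w ω * u ω)|m] =ᵐ[μ] fun ω => w ω * (μ[u|m]) ω :=
    condExp_mul_of_stronglyMeasurable_left hw hwu hu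
  have h0 := integral_condExp (μ := μ) (f := fun ω => w ω * u ω) hm
  rw [← h0]
  exact integral_congr_ae h

lemma aux_uniq {m m0 : MeasurableSpace Ω} (hm : m ≤ m0) (μ : Measure Ω) [IsFiniteMeasure μ]
    {g u : Ω → ℝ} (hg : StronglyMeasurable[m] g) (hgi : Integrable g μ) (hu : Integrable u μ)
    (heq : ∀ A, MeasurableSet[m] A → ∫ ω in A, g ω ∂μ = ∫ ω in A, u ω ∂μ) :
    g =ᵐ[μ] μ[u|m] :=
  ae_eq_condExp_of_forall_setIntegral_eq hm hu (fun _ _ _ => hgi.integrableOn)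
    (fun s hs _ => heq s hs) (StronglyMeasurable.aestronglyMeasurable hg)

lemma integrable_cond {m0 : MeasurableSpace Ω} {μ : Measure Ω} {S : Set Ω} {u : Ω → ℝ}
    (hu : Integrable u μ) (hS : μ S ≠ 0) : Integrable u (μ[|S]) := by
  simp only [ProbabilityTheory.cond]
  exact (hu.integrableOn).smul_measure (ENNReal.inv_ne_top.mpr hS)

lemma aux_cond_ac {m0 : MeasurableSpace Ω} {μ : Measure Ω} {S : Set Ω} (hS : MeasurableSet S) :
    μ[|S] ≪ μ := by
  refine Measure.AbsolutelyContinuous.mk fun s _ h0 => ?_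
  rw [cond_apply hS, measure_inter_null_of_null_right _ h0, mul_zero]

lemma aux_cond_null {m0 : MeasurableSpace Ω} {μ : Measure Ω} [IsFiniteMeasure μ] {S : Set Ω}
    (hS : MeasurableSet S) {D : Set Ω} (h : μ[|S] D = 0) : μ (D ∩ S) = 0 := by
  rw [cond_apply hS] at h
  rcases mul_eq_zero.mp h with h' | h'
  · exact absurd h' (by simp [ENNReal.inv_eq_zero, measure_ne_top])
  · rwa [Set.inter_comm] at h'

lemma aux_null {m m0 : MeasurableSpace Ω} (hm : m ≤ m0) (μ : Measure Ω) [IsFiniteMeasure μ]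
    {S : Set Ω} (hS : MeasurableSet S) {ε : ℝ} (hε : 0 < ε)
    (hb : ∀ᵐ ω ∂μ, ε ≤ (μ[S.indicator (fun _ => (1:ℝ))|m]) ω)
    {D : Set Ω} (hD : MeasurableSet[m] D) (h0 : μ (D ∩ S) = 0) : μ D = 0 := by
  have hD0 : MeasurableSet D := hm D hD
  have hi : Integrable (S.indicator fun _ => (1:ℝ)) μ := (integrable_const 1).indicator hS
  have hz : μ (S ∩ D) = 0 := by rwa [Set.inter_comm]
  have h1 : ∫ ω in D, S.indicator (fun _ => (1:ℝ)) ω ∂μ = 0 := by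
    rw [setIntegral_indicator hS, setIntegral_const]
    simp [Measure.real, h0, hz]
  have h2 : ∫ ω in D, (μ[S.indicator (fun _ => (1:ℝ))|m]) ω ∂μ = 0 :=
    (setIntegral_condExp hm hi hD).trans h1
  have h3 : ε * (μ D).toReal ≤ 0 := by
    have hmono : ∫ ω in D, (fun _ => ε) ω ∂μ ≤ ∫ ω in D, (μ[S.indicator (fun _ => (1:ℝ))|m]) ω ∂μ :=
      integral_mono_ae (integrable_const ε).integrableOn integrable_condExp.integrableOn
        (ae_restrict_of_ae hb)
    rw [h2] at hmono
    simpa [setIntegral_const, smul_eq_mul, mul_comm, Measure.real] using hmono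
  have h4 : (μ D).toReal = 0 := by
    nlinarith [ENNReal.toReal_nonneg (a := μ D)]
  exact ((ENNReal.toReal_eq_zero_iff _).mp h4).resolve_right (measure_ne_top μ D)

end aux

lemma aux_sf_props {Ω : Type*} {mV : MeasurableSpace Ω} (f : @SimpleFunc Ω mV ℝ) :
    Measurable[mV] ⇑f ∧ (∃ C, ∀ ω, ‖f ω‖ ≤ C)
      ∧ ∀ g : @SimpleFunc Ω mV ℝ, ⇑(f + g) = fun ω => f ω + g ω := by
  refine ⟨f.measurable, f.exists_forall_norm_le, fun g => ?_⟩
  funext ω; simp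

lemma aux_sf_piecewise {Ω : Type*} {mV : MeasurableSpace Ω} {S : Set Ω}
    (hS : MeasurableSet[mV] S) (c : ℝ) :
    ⇑(SimpleFunc.piecewise S hS (SimpleFunc.const Ω c) (SimpleFunc.const Ω 0))
      = S.indicator (fun _ => c) := by
  funext ω; by_cases hω : ω ∈ S <;>
    simp [SimpleFunc.piecewise_apply, Set.indicator_apply, hω]

lemma aux_approx_seq {Ω : Type*} {mV : MeasurableSpace Ω} {h : Ω → ℝ}
    (hmeas : Measurable[mV] h) :
    ∃ s : ℕ → @SimpleFunc Ω mV ℝ,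
      (∀ ω, Filter.Tendsto (fun n => s n ω) Filter.atTop (nhds (h ω))) ∧
      (∀ n ω, ‖s n ω‖ ≤ ‖h ω‖ + ‖h ω‖) ∧
      (∀ n, Measurable[mV] ⇑(s n)) := by
  refine ⟨fun n => SimpleFunc.approxOn h hmeas Set.univ 0 (Set.mem_univ 0) n,
    fun ω => SimpleFunc.tendsto_approxOn hmeas _ (by simp), fun n ω =>
    SimpleFunc.norm_approxOn_zero_le hmeas _ ω n, fun n => (SimpleFunc.approxOn h hmeas _ _ _ n).measurable⟩

lemma aux_ext {Ω 𝒳 : Type*} [MeasurableSpace Ω] [MeasurableSpace 𝒳]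
    (P : Measure Ω) [IsProbabilityMeasure P]
    (X : Ω → 𝒳) (R : Ω → ℝ) (V : Ω → ℝ × ℝ)
    (hX : Measurable X) (hR : Measurable R) (hV : Measurable V)
    (hA3 : CondIndepFunGiven (sigmaX X) R V P)
    {h : Ω → ℝ} (hmeas : Measurable[MeasurableSpace.comap V inferInstance] h)
    (hint : Integrable h P) {A : Set Ω} (hA : MeasurableSet[sigmaX X] A) :
    ∫ ω in A, ({ω' | R ω' = 1} : Set Ω).indicator (fun _ => (1:ℝ)) ω * h ω ∂P
      = ∫ ω in A, (MeasureTheory.condExp (sigmaX X) P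
            (({ω' | R ω' = 1} : Set Ω).indicator fun _ => (1:ℝ))) ω
          * (MeasureTheory.condExp (sigmaX X) P h) ω ∂P := by
  have hm : sigmaX X ≤ _ := hX.comap_le
  have hmV : MeasurableSpace.comap V (inferInstance : MeasurableSpace (ℝ × ℝ)) ≤ _ := hV.comap_le
  set S1 : Set Ω := {ω' | R ω' = 1} with hS1def
  set L : Ω → ℝ := MeasureTheory.condExp (sigmaX X) P (S1.indicator fun _ => (1:ℝ)) with hLdef
  have hS1 : MeasurableSet S1 := hR (measurableSet_singleton 1)
  have hA0 : MeasurableSet A := hm A hA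
  have hindint : Integrable (S1.indicator fun _ => (1:ℝ)) P := (integrable_const 1).indicator hS1
  have hLsm : StronglyMeasurable[sigmaX X] L := stronglyMeasurable_condExp
  have hLaesm : AEStronglyMeasurable L P := (hLsm.mono hm).aestronglyMeasurable
  have hLbd : ∀ᵐ ω ∂P, ‖L ω‖ ≤ 1 := by
    have h0 : 0 ≤ᵐ[P] L :=
      condExp_nonneg (Filter.Eventually.of_forall fun ω =>
        Set.indicator_nonneg (fun _ _ => zero_le_one) ω)
    have h1 : L ≤ᵐ[P] MeasureTheory.condExp (sigmaX X) P (fun _ => (1:ℝ)) :=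
      condExp_mono hindint (integrable_const 1)
        (Filter.Eventually.of_forall fun ω => by
          by_cases hω : ω ∈ S1 <;> simp [Set.indicator_apply, hω])
    rw [condExp_const hm] at h1
    filter_upwards [h0, h1] with ω hω0 hω1
    simp only [Pi.zero_apply] at hω0
    rw [Real.norm_eq_abs, abs_le]
    exact ⟨by linarith, hω1⟩
  -- Step 1: the identity for simple functions measurable w.r.t. σ(V)
  have key : ∀ s : @SimpleFunc Ω (MeasurableSpace.comap V inferInstance) ℝ,
      ∫ ω in A, S1.indicator (fun _ => (1:ℝ)) ω * s ω ∂P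
        = ∫ ω in A, L ω * (MeasureTheory.condExp (sigmaX X) P ⇑s) ω ∂P := by
    intro s
    refine @SimpleFunc.induction Ω ℝ (MeasurableSpace.comap V inferInstance) _
      (fun s => ∫ ω in A, S1.indicator (fun _ => (1:ℝ)) ω * s ω ∂P
        = ∫ ω in A, L ω * (MeasureTheory.condExp (sigmaX X) P ⇑s) ω ∂P)
      (fun c S hS => ?_) (fun f g _hdisj ihf ihg => ?_) s
    · obtain ⟨u, hu, rfl⟩ := MeasurableSpace.measurableSet_comap.mp hS
      have hpre : MeasurableSet (V ⁻¹' u) := hV hu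
      have hii : Integrable ((S1 ∩ V ⁻¹' u).indicator fun _ => (1:ℝ)) P :=
        (integrable_const 1).indicator (hS1.inter hpre)
      have hfac := hA3 {1} u (measurableSet_singleton 1) hu
      simp only [cprob, cexp] at hfac
      have hS1eq : R ⁻¹' ({1} : Set ℝ) = S1 := rfl
      rw [hS1eq] at hfac
      rw [aux_sf_piecewise hS c]
      calc ∫ ω in A, S1.indicator (fun _ => (1:ℝ)) ω * (V ⁻¹' u).indicator (fun _ => c) ω ∂P
          = ∫ ω in A, c * ((S1 ∩ V ⁻¹' u).indicator (fun _ => (1:ℝ)) ω) ∂P := by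
            refine setIntegral_congr_fun hA0 fun ω _ => ?_
            by_cases h1 : ω ∈ S1 <;> by_cases h2 : ω ∈ V ⁻¹' u <;>
              simp [Set.indicator_apply, h1, h2]
        _ = c * ∫ ω in A, (S1 ∩ V ⁻¹' u).indicator (fun _ => (1:ℝ)) ω ∂P :=
            integral_const_mul c _
        _ = c * ∫ ω in A, (MeasureTheory.condExp (sigmaX X) P
              ((S1 ∩ V ⁻¹' u).indicator fun _ => (1:ℝ))) ω ∂P := by
            rw [setIntegral_condExp hm hii hA]
        _ = c * ∫ ω in A, L ω * (MeasureTheory.condExp (sigmaX X) P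
              ((V ⁻¹' u).indicator fun _ => (1:ℝ))) ω ∂P := by
            refine congrArg (c * ·) (setIntegral_congr_ae hA0 ?_)
            filter_upwards [hfac] with ω hω _
            exact hω
        _ = ∫ ω in A, L ω * (c * (MeasureTheory.condExp (sigmaX X) P
              ((V ⁻¹' u).indicator fun _ => (1:ℝ))) ω) ∂P := by
            rw [← integral_const_mul]
            exact setIntegral_congr_fun hA0 fun ω _ => by ring
        _ = ∫ ω in A, L ω * (MeasureTheory.condExp (sigmaX X) P
              ((V ⁻¹' u).indicator fun _ => c)) ω ∂P := by
            refine setIntegral_congr_ae hA0 ?_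
            have heq : ((V ⁻¹' u).indicator fun _ => c)
                = c • ((V ⁻¹' u).indicator fun _ => (1:ℝ)) := by
              funext ω; by_cases hω : ω ∈ V ⁻¹' u <;> simp [Set.indicator_apply, hω]
            rw [heq]
            filter_upwards [condExp_smul (μ := P) (m := sigmaX X) c
              ((V ⁻¹' u).indicator fun _ => (1:ℝ))] with ω hω _
            rw [hω, Pi.smul_apply, smul_eq_mul]
    · obtain ⟨hfm, ⟨Cf, hCf⟩, hfadd⟩ := aux_sf_props f
      obtain ⟨hgm, ⟨Cg, hCg⟩, -⟩ := aux_sf_props g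
      have hfi : Integrable ⇑f P :=
        Integrable.mono' (integrable_const Cf) ((hfm.mono hmV le_rfl).aestronglyMeasurable)
          (Filter.Eventually.of_forall hCf)
      have hgi : Integrable ⇑g P :=
        Integrable.mono' (integrable_const Cg) ((hgm.mono hmV le_rfl).aestronglyMeasurable)
          (Filter.Eventually.of_forall hCg)
      have hl1 : Integrable (fun ω => S1.indicator (fun _ => (1:ℝ)) ω * f ω) P :=
        Integrable.bdd_mul hfi ((measurable_const.indicator hS1).aestronglyMeasurable)
          (Filter.Eventually.of_forall (aux_ind_bd S1))
      have hl2 : Integrable (fun ω => S1.indicator (fun _ => (1:ℝ)) ω * g ω) P :=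
        Integrable.bdd_mul hgi ((measurable_const.indicator hS1).aestronglyMeasurable)
          (Filter.Eventually.of_forall (aux_ind_bd S1))
      have hr1 : Integrable (fun ω => L ω * (MeasureTheory.condExp (sigmaX X) P ⇑f) ω) P :=
        Integrable.bdd_mul integrable_condExp hLaesm hLbd
      have hr2 : Integrable (fun ω => L ω * (MeasureTheory.condExp (sigmaX X) P ⇑g) ω) P :=
        Integrable.bdd_mul integrable_condExp hLaesm hLbd
      have hcadd : MeasureTheory.condExp (sigmaX X) P ⇑(f + g)
          =ᵐ[P] MeasureTheory.condExp (sigmaX X) P ⇑f + MeasureTheory.condExp (sigmaX X) P ⇑g := by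
        rw [hfadd g]
        exact condExp_add hfi hgi _
      calc ∫ ω in A, S1.indicator (fun _ => (1:ℝ)) ω * (⇑(f + g)) ω ∂P
          = ∫ ω in A, (S1.indicator (fun _ => (1:ℝ)) ω * f ω
              + S1.indicator (fun _ => (1:ℝ)) ω * g ω) ∂P := by
            refine setIntegral_congr_fun hA0 fun ω _ => ?_
            rw [hfadd g]
            ring
        _ = (∫ ω in A, S1.indicator (fun _ => (1:ℝ)) ω * f ω ∂P)
              + ∫ ω in A, S1.indicator (fun _ => (1:ℝ)) ω * g ω ∂P :=
            integral_add hl1.integrableOn hl2.integrableOn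
        _ = (∫ ω in A, L ω * (MeasureTheory.condExp (sigmaX X) P ⇑f) ω ∂P)
              + ∫ ω in A, L ω * (MeasureTheory.condExp (sigmaX X) P ⇑g) ω ∂P := by
            rw [ihf, ihg]
        _ = ∫ ω in A, (L ω * (MeasureTheory.condExp (sigmaX X) P ⇑f) ω
              + L ω * (MeasureTheory.condExp (sigmaX X) P ⇑g) ω) ∂P :=
            (integral_add hr1.integrableOn hr2.integrableOn).symm
        _ = ∫ ω in A, L ω * (MeasureTheory.condExp (sigmaX X) P ⇑(f + g)) ω ∂P := by
            refine setIntegral_congr_ae hA0 ?_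
            filter_upwards [hcadd] with ω hω _
            rw [hω, Pi.add_apply]
            ring
  -- Step 2: approximation
  obtain ⟨s, hs_tend, hs_bd, hs_m⟩ := aux_approx_seq hmeas
  have hs_meas : ∀ n, AEStronglyMeasurable (⇑(s n)) P := fun n =>
    ((hs_m n).mono hmV le_rfl).aestronglyMeasurable
  have hs_int : ∀ n, Integrable (⇑(s n)) P := fun n =>
    Integrable.mono' (hint.norm.add hint.norm) (hs_meas n)
      (Filter.Eventually.of_forall (hs_bd n))
  have hsh_int : ∀ n, Integrable (fun ω => s n ω - h ω) P := fun n => (hs_int n).sub hint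
  have conv1 : Filter.Tendsto (fun n => ∫ ω in A, S1.indicator (fun _ => (1:ℝ)) ω * s n ω ∂P)
      Filter.atTop (nhds (∫ ω in A, S1.indicator (fun _ => (1:ℝ)) ω * h ω ∂P)) := by
    refine tendsto_integral_of_dominated_convergence (fun ω => ‖h ω‖ + ‖h ω‖)
      (fun n => ((measurable_const.indicator hS1).aestronglyMeasurable.mul (hs_meas n)).restrict)
      ((hint.norm.add hint.norm).integrableOn) (fun n => ?_) ?_
    · refine Filter.Eventually.of_forall fun ω => ?_
      calc ‖S1.indicator (fun _ => (1:ℝ)) ω * s n ω‖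
          = ‖S1.indicator (fun _ => (1:ℝ)) ω‖ * ‖s n ω‖ := norm_mul _ _
        _ ≤ 1 * (‖h ω‖ + ‖h ω‖) :=
            mul_le_mul (aux_ind_bd S1 ω) (hs_bd n ω) (norm_nonneg _) zero_le_one
        _ = ‖h ω‖ + ‖h ω‖ := one_mul _
    · exact Filter.Eventually.of_forall fun ω => ((hs_tend ω).const_mul _)
  have hcontract : ∀ n, dist (∫ ω in A, L ω * (MeasureTheory.condExp (sigmaX X) P ⇑(s n)) ω ∂P)
      (∫ ω in A, L ω * (MeasureTheory.condExp (sigmaX X) P h) ω ∂P)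
        ≤ ∫ ω, |s n ω - h ω| ∂P := by
    intro n
    have hints : Integrable (fun ω => L ω * (MeasureTheory.condExp (sigmaX X) P ⇑(s n)) ω) P :=
      Integrable.bdd_mul integrable_condExp hLaesm hLbd
    have hinth : Integrable (fun ω => L ω * (MeasureTheory.condExp (sigmaX X) P h) ω) P :=
      Integrable.bdd_mul integrable_condExp hLaesm hLbd
    have hsub : MeasureTheory.condExp (sigmaX X) P ⇑(s n) - MeasureTheory.condExp (sigmaX X) P h
        =ᵐ[P] MeasureTheory.condExp (sigmaX X) P (fun ω => s n ω - h ω) :=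
      (condExp_sub (hs_int n) hint _).symm
    rw [Real.dist_eq, ← integral_sub hints.integrableOn hinth.integrableOn]
    have e1 : ∫ ω in A, (L ω * (MeasureTheory.condExp (sigmaX X) P ⇑(s n)) ω
          - L ω * (MeasureTheory.condExp (sigmaX X) P h) ω) ∂P
        = ∫ ω in A, L ω * ((MeasureTheory.condExp (sigmaX X) P ⇑(s n)) ω
          - (MeasureTheory.condExp (sigmaX X) P h) ω) ∂P :=
      setIntegral_congr_fun hA0 fun ω _ => by ring
    rw [e1]
    calc |∫ ω in A, L ω * ((MeasureTheory.condExp (sigmaX X) P ⇑(s n)) ω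
            - (MeasureTheory.condExp (sigmaX X) P h) ω) ∂P|
        = ‖∫ ω in A, L ω * ((MeasureTheory.condExp (sigmaX X) P ⇑(s n)) ω
            - (MeasureTheory.condExp (sigmaX X) P h) ω) ∂P‖ := (Real.norm_eq_abs _).symm
      _ ≤ ∫ ω in A, ‖L ω * ((MeasureTheory.condExp (sigmaX X) P ⇑(s n)) ω
            - (MeasureTheory.condExp (sigmaX X) P h) ω)‖ ∂P := norm_integral_le_integral_norm _
      _ ≤ ∫ ω in A, |(MeasureTheory.condExp (sigmaX X) P ⇑(s n)) ω
            - (MeasureTheory.condExp (sigmaX X) P h) ω| ∂P := by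
          refine integral_mono_ae ?_ ?_ ?_
          · exact (Integrable.bdd_mul (integrable_condExp.sub integrable_condExp)
              hLaesm hLbd).norm.integrableOn
          · exact (integrable_condExp.sub integrable_condExp).abs.integrableOn
          · refine ae_restrict_of_ae (hLbd.mono fun ω hω => ?_)
            dsimp only
            rw [Real.norm_eq_abs, abs_mul]
            refine mul_le_of_le_one_left (abs_nonneg _) ?_
            rwa [Real.norm_eq_abs] at hω
      _ ≤ ∫ ω, |(MeasureTheory.condExp (sigmaX X) P ⇑(s n)) ω
            - (MeasureTheory.condExp (sigmaX X) P h) ω| ∂P :=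
          setIntegral_le_integral (integrable_condExp.sub integrable_condExp).abs
            (Filter.Eventually.of_forall fun ω => abs_nonneg _)
      _ = ∫ ω, |(MeasureTheory.condExp (sigmaX X) P (fun ω => s n ω - h ω)) ω| ∂P := by
          refine integral_congr_ae (hsub.mono fun ω hω => ?_)
          dsimp only
          simp only [Pi.sub_apply] at hω
          rw [hω]
      _ ≤ ∫ ω, |s n ω - h ω| ∂P := integral_abs_condExp_le _
  have hzero : Filter.Tendsto (fun n => ∫ ω, |s n ω - h ω| ∂P) Filter.atTop (nhds 0) := by
    have h0 : (0:ℝ) = ∫ _ω, (0:ℝ) ∂P := by simp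
    rw [h0]
    refine tendsto_integral_of_dominated_convergence (fun ω => ‖h ω‖ + ‖h ω‖ + ‖h ω‖)
      (fun n => ((hsh_int n).abs).aestronglyMeasurable) ?_ (fun n => ?_) ?_
    · exact (hint.norm.add hint.norm).add hint.norm
    · refine Filter.Eventually.of_forall fun ω => ?_
      have hb : |s n ω - h ω| ≤ ‖s n ω‖ + ‖h ω‖ := by
        rw [← Real.norm_eq_abs]; exact norm_sub_le _ _
      calc ‖|s n ω - h ω|‖ = |s n ω - h ω| := by
            rw [Real.norm_eq_abs, abs_abs]
        _ ≤ ‖s n ω‖ + ‖h ω‖ := hb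
        _ ≤ ‖h ω‖ + ‖h ω‖ + ‖h ω‖ := by linarith [hs_bd n ω]
    · refine Filter.Eventually.of_forall fun ω => ?_
      have ht : Filter.Tendsto (fun n => s n ω - h ω) Filter.atTop (nhds (h ω - h ω)) :=
        (hs_tend ω).sub tendsto_const_nhds
      rw [sub_self] at ht
      simpa using ht.abs
  have conv2 : Filter.Tendsto
      (fun n => ∫ ω in A, L ω * (MeasureTheory.condExp (sigmaX X) P ⇑(s n)) ω ∂P)
      Filter.atTop (nhds (∫ ω in A, L ω * (MeasureTheory.condExp (sigmaX X) P h) ω ∂P)) := by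
    rw [tendsto_iff_dist_tendsto_zero]
    exact squeeze_zero (fun n => dist_nonneg) hcontract hzero
  have conv1' : Filter.Tendsto
      (fun n => ∫ ω in A, L ω * (MeasureTheory.condExp (sigmaX X) P ⇑(s n)) ω ∂P)
      Filter.atTop (nhds (∫ ω in A, S1.indicator (fun _ => (1:ℝ)) ω * h ω ∂P)) :=
    conv1.congr fun n => key (s n)
  exact tendsto_nhds_unique conv1' conv2

lemma aux_pull_ind {Ω : Type*} {m m0 : MeasurableSpace Ω} (hm : m ≤ m0) (μ : Measure Ω)
    [IsFiniteMeasure μ] {S : Set Ω} (hS : MeasurableSet S)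
    {v : Ω → ℝ} (hv : StronglyMeasurable[m] v) (hvi : Integrable v μ)
    {A : Set Ω} (hA : MeasurableSet[m] A) :
    ∫ ω in A, S.indicator (fun _ => (1:ℝ)) ω * v ω ∂μ
      = ∫ ω in A, (μ[S.indicator (fun _ => (1:ℝ))|m]) ω * v ω ∂μ := by
  have hA0 : MeasurableSet A := hm A hA
  have hw : StronglyMeasurable[m] (A.indicator v) := hv.indicator hA
  have hwi : Integrable (A.indicator v) μ := hvi.indicator hA0
  have hindi : Integrable (S.indicator fun _ => (1:ℝ)) μ := (integrable_const 1).indicator hS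
  have hprod : Integrable (fun ω => A.indicator v ω * S.indicator (fun _ => (1:ℝ)) ω) μ := by
    have hp := Integrable.bdd_mul (c := 1) hwi
      ((measurable_const.indicator hS).aestronglyMeasurable)
      (Filter.Eventually.of_forall (aux_ind_bd S))
    exact hp.congr (Filter.Eventually.of_forall fun ω => mul_comm _ _)
  have h1 := aux_pull_out hm μ hw hindi hprod
  have e1 : ∫ ω, A.indicator v ω * S.indicator (fun _ => (1:ℝ)) ω ∂μ
      = ∫ ω in A, S.indicator (fun _ => (1:ℝ)) ω * v ω ∂μ := by
    rw [← integral_indicator hA0]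
    refine integral_congr_ae (Filter.Eventually.of_forall fun ω => ?_)
    by_cases hω : ω ∈ A <;> simp [Set.indicator_apply, hω, mul_comm]
  have e2 : ∫ ω, A.indicator v ω * (μ[S.indicator (fun _ => (1:ℝ))|m]) ω ∂μ
      = ∫ ω in A, (μ[S.indicator (fun _ => (1:ℝ))|m]) ω * v ω ∂μ := by
    rw [← integral_indicator hA0]
    refine integral_congr_ae (Filter.Eventually.of_forall fun ω => ?_)
    by_cases hω : ω ∈ A <;> simp [Set.indicator_apply, hω, mul_comm]
  rw [← e1, h1, e2]

theorem master {Ω 𝒳 : Type*} [MeasurableSpace Ω] [MeasurableSpace 𝒳]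
    (P : Measure Ω) [IsProbabilityMeasure P]
    (X : Ω → 𝒳) (R T : Ω → ℝ) (V : Ω → ℝ × ℝ) (W Y : Ω → ℝ) (t : ℝ)
    (hX : Measurable X) (hR : Measurable R) (hT : Measurable T) (hV : Measurable V)
    (φ : ℝ × ℝ → ℝ) (hφ : Measurable φ) (hWV : W = φ ∘ V)
    (hWint : Integrable W P)
    (hRbin : ∀ ω, R ω = 0 ∨ R ω = 1)
    (hYW : ∀ ω, T ω = t → Y ω = W ω)
    (ε : ℝ) (hε : 0 < ε)
    (hlam_pos : P {ω | R ω = 1} ≠ 0)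
    (hlamX : ∀ᵐ ω ∂P, ε ≤ cprob (sigmaX X) P {ω' | R ω' = 1} ω ∧
      cprob (sigmaX X) P {ω' | R ω' = 1} ω ≤ 1 - ε)
    (hpi1 : ∀ᵐ ω ∂P,
      ε ≤ cprob (sigmaX X) (P[|{ω' | R ω' = 1}]) {ω' | T ω' = t} ω ∧
      cprob (sigmaX X) (P[|{ω' | R ω' = 1}]) {ω' | T ω' = t} ω ≤ 1 - ε)
    (hA1 : IndepFun T (fun ω => (V ω, X ω)) (P[|{ω | R ω = 1}]))
    (hA3 : CondIndepFunGiven (sigmaX X) R V P) :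
    ((∫ ω', W ω' ∂P) = ∫ ω, R ω * (if T ω = t then (1:ℝ) else 0) * Y ω /
        (cprob (sigmaX X) P {ω' | R ω' = 1} ω
          * ((P[|{ω' | R ω' = 1}]) {ω' | T ω' = t}).toReal) ∂P) ∧
    ((∫ ω', W ω' ∂P) = ∫ ω, cexp (sigmaX X) (P[|{ω' | R ω' = 1}]) W ω ∂P) ∧
    (cexp (sigmaX X) (P[|{ω' | R ω' = 1}]) W
      =ᵐ[P] cexp (sigmaX X) (P[|({ω' | T ω' = t} ∩ {ω' | R ω' = 1})]) Y) := by
  have hm : sigmaX X ≤ _ := hX.comap_le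
  have hmV : MeasurableSpace.comap V (inferInstance : MeasurableSpace (ℝ × ℝ)) ≤ _ := hV.comap_le
  simp only [cprob, cexp] at hlamX hpi1 ⊢
  set S1 : Set Ω := {ω' | R ω' = 1} with hS1def
  set St : Set Ω := {ω' | T ω' = t} with hStdef
  have hS1 : MeasurableSet S1 := hR (measurableSet_singleton 1)
  have hSt : MeasurableSet St := hT (measurableSet_singleton t)
  set P1 : Measure Ω := P[|S1] with hP1def
  haveI hP1prob : IsProbabilityMeasure P1 := cond_isProbabilityMeasure hlam_pos
  set ind1 : Ω → ℝ := S1.indicator (fun _ => (1:ℝ)) with hind1def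
  set indT : Ω → ℝ := St.indicator (fun _ => (1:ℝ)) with hindTdef
  set L : Ω → ℝ := MeasureTheory.condExp (sigmaX X) P ind1 with hLdef
  set f : Ω → ℝ := MeasureTheory.condExp (sigmaX X) P W with hfdef
  set fh : Ω → ℝ := MeasureTheory.condExp (sigmaX X) P1 W with hfhdef
  set Lt : Ω → ℝ := MeasureTheory.condExp (sigmaX X) P1 indT with hLtdef
  set π : ℝ := (P1 St).toReal with hπdef
  have hlt0 : (P S1).toReal ≠ 0 := ENNReal.toReal_ne_zero.mpr ⟨hlam_pos, measure_ne_top P S1⟩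
  have hWmV : Measurable[MeasurableSpace.comap V inferInstance] W := by
    rw [hWV]; exact hφ.comp (Measurable.of_comap_le le_rfl)
  have hP1ac : P1 ≪ P := aux_cond_ac hS1
  have hLpos : ∀ᵐ ω ∂P, ε ≤ L ω := hlamX.mono fun ω h => h.1
  have hLbd : ∀ᵐ ω ∂P, ‖L ω‖ ≤ 1 := by
    filter_upwards [hlamX] with ω hω
    rw [Real.norm_eq_abs, abs_le]
    constructor <;> linarith [hω.1, hω.2]
  have hLtb : ∀ᵐ ω ∂P1, ε ≤ Lt ω := (hpi1.mono fun ω h => h.1).filter_mono hP1ac.ae_le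
  have hLtbP : ∀ᵐ ω ∂P, ε ≤ Lt ω := hpi1.mono fun ω h => h.1
  have hindTint1 : Integrable indT P1 := (integrable_const 1).indicator hSt
  -- π ≥ ε > 0
  have hintindT : ∫ ω, indT ω ∂P1 = π := by
    rw [hindTdef, integral_indicator hSt, setIntegral_const, Measure.real, smul_eq_mul, mul_one, hπdef]
  have hπε : ε ≤ π := by
    have h2 : ∫ ω, Lt ω ∂P1 = π := by
      rw [hLtdef]
      exact (integral_condExp hm).trans hintindT
    have h3 : ∫ ω, (fun _ => ε) ω ∂P1 ≤ ∫ ω, Lt ω ∂P1 :=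
      integral_mono_ae (integrable_const ε) integrable_condExp hLtb
    simpa [h2] using h3
  have hπpos : 0 < π := lt_of_lt_of_le hε hπε
  have hP1St0 : P1 St ≠ 0 := by
    intro h0
    rw [hπdef, h0, ENNReal.toReal_zero] at hπpos
    exact lt_irrefl 0 hπpos
  have hPStS1 : P (St ∩ S1) ≠ 0 := by
    intro h0
    apply hP1St0
    rw [hP1def, cond_apply hS1, Set.inter_comm S1 St, h0, mul_zero]
  -- integrability under the conditional measures
  have hWint1 : Integrable W P1 := integrable_cond hWint hlam_pos
  have hfint1 : Integrable f P1 := integrable_cond integrable_condExp hlam_pos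
  -- set-integrals under P1 in terms of P
  have hcondInt : ∀ (u : Ω → ℝ) (A : Set Ω), MeasurableSet A →
      ∫ ω in A, u ω ∂P1 = (P S1).toReal⁻¹ * ∫ ω in A, ind1 ω * u ω ∂P := by
    intro u A hA
    rw [hP1def, aux_setIntegral_cond P hS1 hA u]
    congr 1
    have e : ∫ ω in A, ind1 ω * u ω ∂P = ∫ ω in A, S1.indicator u ω ∂P :=
      setIntegral_congr_fun hA fun ω _ => by
        by_cases hω : ω ∈ S1 <;> simp [hind1def, Set.indicator_apply, hω]
    rw [e, setIntegral_indicator hS1]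
  -- product formula from (A1)
  have hIndTX : IndepFun T X P1 :=
    hA1.comp measurable_id (measurable_snd : Measurable fun p : (ℝ × ℝ) × 𝒳 => p.2)
  have hStA : ∀ B, MeasurableSet B → P1 (St ∩ X ⁻¹' B) = P1 St * P1 (X ⁻¹' B) := by
    intro B hB
    have h := hIndTX.measure_inter_preimage_eq_mul {t} B (measurableSet_singleton t) hB
    exact h
  have hprodInt : ∀ (A : Set Ω), MeasurableSet[sigmaX X] A →
      ∫ ω in A, indT ω * W ω ∂P1 = π * ∫ ω in A, W ω ∂P1 := by
    intro A hA
    obtain ⟨B, hB, rfl⟩ := MeasurableSpace.measurableSet_comap.mp hA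
    have hXB : MeasurableSet (X ⁻¹' B) := hX hB
    set χ : ℝ → ℝ := ({t} : Set ℝ).indicator (fun _ => (1:ℝ)) with hχdef
    set ψ : (ℝ × ℝ) × 𝒳 → ℝ := fun p => B.indicator (fun _ => (1:ℝ)) p.2 * φ p.1 with hψdef
    have hχm : Measurable χ := measurable_const.indicator (measurableSet_singleton t)
    have hψm : Measurable ψ :=
      ((measurable_const.indicator hB).comp measurable_snd).mul (hφ.comp measurable_fst)
    have hIF : IndepFun (χ ∘ T) (ψ ∘ fun ω => (V ω, X ω)) P1 := hA1.comp hχm hψm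
    have hmul : ∫ ω, (χ ∘ T) ω * (ψ ∘ fun ω => (V ω, X ω)) ω ∂P1
        = (∫ ω, (χ ∘ T) ω ∂P1) * ∫ ω, (ψ ∘ fun ω => (V ω, X ω)) ω ∂P1 :=
      hIF.integral_mul_eq_mul_integral ((hχm.comp hT).aestronglyMeasurable)
      ((hψm.comp (hV.prodMk hX)).aestronglyMeasurable)
    have eχ : ∀ ω, (χ ∘ T) ω = indT ω := fun ω => by
      by_cases hω : T ω = t <;>
        simp [hχdef, hindTdef, Function.comp, Set.indicator_apply, hStdef, hω]
    have eψ : ∀ ω, (ψ ∘ fun ω => (V ω, X ω)) ω = (X ⁻¹' B).indicator W ω := fun ω => by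
      by_cases hω : X ω ∈ B <;>
        simp [hψdef, Function.comp, Set.indicator_apply, hω, hWV]
    have estep : ∫ ω in X ⁻¹' B, indT ω * W ω ∂P1
        = ∫ ω, (χ ∘ T) ω * (ψ ∘ fun ω => (V ω, X ω)) ω ∂P1 := by
      rw [← integral_indicator hXB]
      refine integral_congr_ae (Filter.Eventually.of_forall fun ω => ?_)
      dsimp only
      rw [eχ ω, eψ ω]
      by_cases hω : X ω ∈ B <;> simp [Set.indicator_apply, hω]
    have eA : ∫ ω, (ψ ∘ fun ω => (V ω, X ω)) ω ∂P1 = ∫ ω in X ⁻¹' B, W ω ∂P1 := by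
      rw [← integral_indicator hXB]
      exact integral_congr_ae (Filter.Eventually.of_forall fun ω => eψ ω)
    have eT : ∫ ω, (χ ∘ T) ω ∂P1 = π := by
      calc ∫ ω, (χ ∘ T) ω ∂P1 = ∫ ω, indT ω ∂P1 :=
            integral_congr_ae (Filter.Eventually.of_forall fun ω => eχ ω)
        _ = π := hintindT
    rw [estep, hmul, eT, eA]
  -- the (A3) identity
  have hEXT : ∀ A, MeasurableSet[sigmaX X] A →
      ∫ ω in A, ind1 ω * W ω ∂P = ∫ ω in A, L ω * f ω ∂P := fun A hA =>
    aux_ext P X R V hX hR hV hA3 hWmV hWint hA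
  -- f = fh a.e. under P1
  have hfP1 : f =ᵐ[P1] fh := by
    refine aux_uniq hm P1 stronglyMeasurable_condExp hfint1 hWint1 ?_
    intro A hA
    have hA0 : MeasurableSet A := hm A hA
    rw [hcondInt f A hA0, hcondInt W A hA0]
    congr 1
    have h1 : ∫ ω in A, ind1 ω * f ω ∂P = ∫ ω in A, L ω * f ω ∂P :=
      aux_pull_ind hm P hS1 stronglyMeasurable_condExp integrable_condExp hA
    rw [h1, hEXT A hA]
  -- null-set lifting
  have hnull : ∀ D : Set Ω, MeasurableSet[sigmaX X] D → P (D ∩ S1) = 0 → P D = 0 := by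
    intro D hD h0
    refine aux_null hm P hS1 hε ?_ hD h0
    exact hLpos
  have hnull1 : ∀ D : Set Ω, MeasurableSet[sigmaX X] D → P1 (D ∩ St) = 0 → P1 D = 0 := by
    intro D hD h0
    refine aux_null hm P1 hSt hε ?_ hD h0
    exact hLtb
  -- conclusion (2)
  have hfaeP : f =ᵐ[P] fh := by
    have hDm : MeasurableSet[sigmaX X] {ω | ¬ f ω = fh ω} := by
      have h1 : Measurable[sigmaX X] f := stronglyMeasurable_condExp.measurable
      have h2 : Measurable[sigmaX X] fh := stronglyMeasurable_condExp.measurable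
      exact (measurableSet_eq_fun h1 h2).compl
    have hP1D : P1 {ω | ¬ f ω = fh ω} = 0 := by
      have h := hfP1
      rw [Filter.EventuallyEq, ae_iff] at h
      exact h
    have hPD1 : P ({ω | ¬ f ω = fh ω} ∩ S1) = 0 := aux_cond_null hS1 hP1D
    have hPD : P {ω | ¬ f ω = fh ω} = 0 := hnull _ hDm hPD1
    rw [Filter.EventuallyEq, ae_iff]
    exact hPD
  have goal2 : ∫ ω, W ω ∂P = ∫ ω, fh ω ∂P := by
    have h1 : ∫ ω, f ω ∂P = ∫ ω, W ω ∂P := integral_condExp hm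
    rw [← h1]
    exact integral_congr_ae hfaeP
  -- conclusion (3)
  set S2 : Set Ω := St ∩ S1 with hS2def
  have hS2 : MeasurableSet S2 := hSt.inter hS1
  set P2 : Measure Ω := P[|S2] with hP2def
  have hP2eq : P2 = P1[|St] := by
    rw [hP2def, hP1def, cond_cond_eq_cond_inter hS1 hSt, hS2def, Set.inter_comm S1 St]
  haveI hP2prob : IsProbabilityMeasure P2 := cond_isProbabilityMeasure (by
    rw [hS2def]; exact hPStS1)
  have hWint2 : Integrable W P2 := integrable_cond hWint (by rw [hS2def]; exact hPStS1)
  have hfhint2 : Integrable fh P2 := by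
    rw [hP2eq]
    exact integrable_cond integrable_condExp hP1St0
  have hYW2 : Y =ᵐ[P2] W := by
    rw [Filter.EventuallyEq, ae_iff]
    rw [hP2def, cond_apply hS2]
    have he : S2 ∩ {ω | ¬ Y ω = W ω} = ∅ := by
      ext ω
      simp only [Set.mem_inter_iff, Set.mem_empty_iff_false, iff_false, not_and,
        Set.mem_setOf_eq, hS2def, hStdef, hS1def]
      rintro ⟨hTt, -⟩ hne
      exact hne (hYW ω hTt)
    rw [he, measure_empty, mul_zero]
  have hLtconst : (fun _ : Ω => π) =ᵐ[P1] Lt := by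
    refine aux_uniq hm P1 stronglyMeasurable_const (integrable_const π) hindTint1 ?_
    intro A hA
    obtain ⟨B, hB, rfl⟩ := MeasurableSpace.measurableSet_comap.mp hA
    have hXB : MeasurableSet (X ⁻¹' B) := hX hB
    have h1 : ∫ ω in X ⁻¹' B, (fun _ : Ω => π) ω ∂P1 = (P1 (X ⁻¹' B)).toReal * π := by
      rw [setIntegral_const, smul_eq_mul, Measure.real]
    have h2 : ∫ ω in X ⁻¹' B, indT ω ∂P1 = (P1 (St ∩ X ⁻¹' B)).toReal := by
      rw [hindTdef, setIntegral_indicator hSt, setIntegral_const, Measure.real, smul_eq_mul, mul_one,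
        Set.inter_comm]
    rw [h1, h2, hStA B hB, ENNReal.toReal_mul, hπdef, mul_comm]
  have hfhP2 : fh =ᵐ[P2] MeasureTheory.condExp (sigmaX X) P2 W := by
    refine aux_uniq hm P2 stronglyMeasurable_condExp hfhint2 hWint2 ?_
    intro A hA
    have hA0 : MeasurableSet A := hm A hA
    have hcond2 : ∀ u : Ω → ℝ,
        ∫ ω in A, u ω ∂P2 = (P1 St).toReal⁻¹ * ∫ ω in A, indT ω * u ω ∂P1 := by
      intro u
      rw [hP2eq, aux_setIntegral_cond P1 hSt hA0 u]
      congr 1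
      have e : ∫ ω in A, indT ω * u ω ∂P1 = ∫ ω in A, St.indicator u ω ∂P1 :=
        setIntegral_congr_fun hA0 fun ω _ => by
          by_cases hω : ω ∈ St <;> simp [hindTdef, Set.indicator_apply, hω]
      rw [e, setIntegral_indicator hSt]
    rw [hcond2 fh, hcond2 W]
    congr 1
    have e1 : ∫ ω in A, indT ω * fh ω ∂P1 = ∫ ω in A, Lt ω * fh ω ∂P1 :=
      aux_pull_ind hm P1 hSt stronglyMeasurable_condExp integrable_condExp hA
    have e2 : ∫ ω in A, Lt ω * fh ω ∂P1 = ∫ ω in A, π * fh ω ∂P1 := by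
      refine setIntegral_congr_ae hA0 ?_
      filter_upwards [hLtconst] with ω hω _
      rw [← hω]
    have e3 : ∫ ω in A, π * fh ω ∂P1 = π * ∫ ω in A, fh ω ∂P1 := integral_const_mul π _
    have e4 : ∫ ω in A, fh ω ∂P1 = ∫ ω in A, W ω ∂P1 := setIntegral_condExp hm hWint1 hA
    have e5 : ∫ ω in A, indT ω * W ω ∂P1 = π * ∫ ω in A, W ω ∂P1 := hprodInt A hA
    rw [e1, e2, e3, e4, e5]
  have goal3 : fh =ᵐ[P] MeasureTheory.condExp (sigmaX X) P2 Y := by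
    have hfh2 : fh =ᵐ[P2] MeasureTheory.condExp (sigmaX X) P2 Y :=
      hfhP2.trans (condExp_congr_ae hYW2).symm
    set D : Set Ω := {ω | ¬ fh ω = (MeasureTheory.condExp (sigmaX X) P2 Y) ω} with hDdef
    have hDm : MeasurableSet[sigmaX X] D := by
      have h1 : Measurable[sigmaX X] fh := stronglyMeasurable_condExp.measurable
      have h2 : Measurable[sigmaX X] (MeasureTheory.condExp (sigmaX X) P2 Y) :=
        stronglyMeasurable_condExp.measurable
      exact (measurableSet_eq_fun h1 h2).compl
    have hP2D : P2 D = 0 := by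
      have h := hfh2
      rw [Filter.EventuallyEq, ae_iff] at h
      exact h
    have hPD2 : P (D ∩ S2) = 0 := aux_cond_null hS2 hP2D
    have hP1D : P1 (D ∩ St) = 0 := by
      rw [hP1def, cond_apply hS1]
      have hsub : S1 ∩ (D ∩ St) ⊆ D ∩ S2 := by
        rintro ω ⟨h1, hD, hT⟩
        exact ⟨hD, hT, h1⟩
      rw [measure_mono_null hsub hPD2, mul_zero]
    have hP1D' : P1 D = 0 := hnull1 _ hDm hP1D
    have hPDS1 : P (D ∩ S1) = 0 := aux_cond_null hS1 hP1D'
    have hPD : P D = 0 := hnull _ hDm hPDS1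
    rw [Filter.EventuallyEq, ae_iff]
    exact hPD
  -- conclusion (1)
  set K : Ω → ℝ := fun ω => (L ω)⁻¹ * π⁻¹ with hKdef
  have hKm : StronglyMeasurable[sigmaX X] K :=
    (stronglyMeasurable_condExp.measurable.inv.mul_const π⁻¹).stronglyMeasurable
  have hKbd : ∀ᵐ ω ∂P, ‖K ω‖ ≤ ε⁻¹ * π⁻¹ := by
    filter_upwards [hLpos] with ω hω
    have hL0 : 0 < L ω := lt_of_lt_of_le hε hω
    rw [hKdef, Real.norm_eq_abs, abs_mul, abs_of_nonneg (le_of_lt (inv_pos.mpr hL0)),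
      abs_of_nonneg (le_of_lt (inv_pos.mpr hπpos))]
    exact mul_le_mul_of_nonneg_right (inv_anti₀ hε hω) (le_of_lt (inv_pos.mpr hπpos))
  set u0 : Ω → ℝ := fun ω => ind1 ω * (indT ω * W ω) with hu0def
  have hu0int : Integrable u0 P := by
    have h1 : Integrable (fun ω => indT ω * W ω) P :=
      Integrable.bdd_mul hWint ((measurable_const.indicator hSt).aestronglyMeasurable)
        (Filter.Eventually.of_forall (aux_ind_bd St))
    exact Integrable.bdd_mul h1 ((measurable_const.indicator hS1).aestronglyMeasurable)
      (Filter.Eventually.of_forall (aux_ind_bd S1))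
  have hgsm : StronglyMeasurable[sigmaX X] (fun ω => π * (L ω * f ω)) :=
    (stronglyMeasurable_condExp.mul stronglyMeasurable_condExp).const_mul π
  have hgint : Integrable (fun ω => π * (L ω * f ω)) P := by
    have h1 : Integrable (fun ω => L ω * f ω) P :=
      Integrable.bdd_mul integrable_condExp ((stronglyMeasurable_condExp.mono hm).aestronglyMeasurable) hLbd
    exact h1.const_mul π
  have hcondu0 : (fun ω => π * (L ω * f ω)) =ᵐ[P] MeasureTheory.condExp (sigmaX X) P u0 := by
    refine aux_uniq hm P hgsm hgint hu0int ?_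
    intro A hA
    have hA0 : MeasurableSet A := hm A hA
    have d1 : ∫ ω in A, indT ω * W ω ∂P1 = (P S1).toReal⁻¹ * ∫ ω in A, u0 ω ∂P :=
      hcondInt (fun ω => indT ω * W ω) A hA0
    have d2 : ∫ ω in A, indT ω * W ω ∂P1 = π * ∫ ω in A, W ω ∂P1 := hprodInt A hA
    have d3 : ∫ ω in A, W ω ∂P1 = (P S1).toReal⁻¹ * ∫ ω in A, ind1 ω * W ω ∂P :=
      hcondInt W A hA0
    have d4 : ∫ ω in A, ind1 ω * W ω ∂P = ∫ ω in A, L ω * f ω ∂P := hEXT A hA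
    have h1 : (P S1).toReal⁻¹ * ∫ ω in A, u0 ω ∂P
        = π * ((P S1).toReal⁻¹ * ∫ ω in A, L ω * f ω ∂P) := by
      rw [← d1, d2, d3, d4]
    have h2 : ∫ ω in A, u0 ω ∂P = π * ∫ ω in A, L ω * f ω ∂P := by
      field_simp at h1
      linarith
    rw [integral_const_mul π, h2]
  have hKu0int : Integrable (fun ω => K ω * u0 ω) P :=
    Integrable.bdd_mul hu0int ((hKm.mono hm).aestronglyMeasurable) hKbd
  have p1 : ∫ ω, K ω * u0 ω ∂P = ∫ ω, K ω * (MeasureTheory.condExp (sigmaX X) P u0) ω ∂P :=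
    aux_pull_out hm P hKm hu0int hKu0int
  have p2 : ∫ ω, K ω * (MeasureTheory.condExp (sigmaX X) P u0) ω ∂P
      = ∫ ω, K ω * (π * (L ω * f ω)) ∂P := by
    refine integral_congr_ae (hcondu0.mono fun ω hω => ?_)
    exact congrArg (fun z => K ω * z) hω.symm
  have p3 : ∫ ω, K ω * (π * (L ω * f ω)) ∂P = ∫ ω, f ω ∂P := by
    refine integral_congr_ae ?_
    filter_upwards [hLpos] with ω hω
    have hL0 : L ω ≠ 0 := ne_of_gt (lt_of_lt_of_le hε hω)
    show (L ω)⁻¹ * π⁻¹ * (π * (L ω * f ω)) = f ω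
    field_simp
  have p4 : ∫ ω, f ω ∂P = ∫ ω, W ω ∂P := integral_condExp hm
  have goal1 : ∫ ω, W ω ∂P = ∫ ω, K ω * u0 ω ∂P := by
    rw [p1, p2, p3, p4]
  have hpt : (fun ω => R ω * (if T ω = t then (1:ℝ) else 0) * Y ω / (L ω * π))
      = fun ω => K ω * u0 ω := by
    funext ω
    rcases hRbin ω with h0 | h1
    · have hns1 : ω ∉ S1 := by
        rw [hS1def]
        simp [h0]
      by_cases hTt : T ω = t <;>
        simp [hu0def, hind1def, Set.indicator_apply, hns1, h0, hTt]
    · have hs1 : ω ∈ S1 := by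
        rw [hS1def]; exact h1
      by_cases hTt : T ω = t
      · have hst : ω ∈ St := by rw [hStdef]; exact hTt
        rw [hYW ω hTt]
        simp only [hu0def, hind1def, hindTdef, Set.indicator_of_mem hs1,
          Set.indicator_of_mem hst, h1, hTt, if_pos, one_mul, hKdef]
        rw [div_eq_mul_inv, mul_inv]
        ring
      · have hst : ω ∉ St := by rw [hStdef]; exact hTt
        simp [hu0def, hindTdef, Set.indicator_of_notMem hst, hTt]
  refine ⟨?_, ?_, ?_⟩
  · rw [hpt]
    exact goal1
  · exact goal2
  · exact goal3

theorem stmt5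
    {Ω 𝒳 : Type*} [MeasurableSpace Ω] [MeasurableSpace 𝒳] [StandardBorelSpace 𝒳]
    (P : Measure Ω) [IsProbabilityMeasure P]
    (X : Ω → 𝒳) (R T Y₁ Y₀ Y : Ω → ℝ) (Yt : ℝ → Ω → ℝ)
    (hX : Measurable X) (hR : Measurable R) (hT : Measurable T)
    (hY₁m : Measurable Y₁) (hY₀m : Measurable Y₀)
    (hRbin : ∀ ω, R ω = 0 ∨ R ω = 1) (hTbin : ∀ ω, T ω = 0 ∨ T ω = 1)
    (hY₁2 : MemLp Y₁ 2 P) (hY₀2 : MemLp Y₀ 2 P)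
    (hY : Y = fun ω => T ω * Y₁ ω + (1 - T ω) * Y₀ ω)
    (hYt1 : Yt 1 = Y₁) (hYt0 : Yt 0 = Y₀)
    (ε : ℝ) (hε : 0 < ε)
    (hlam_pos : 0 < P {ω | R ω = 1}) (hlam_lt : P {ω | R ω = 1} < 1)
    (hlamX : ∀ᵐ ω ∂P, ε ≤ cprob (sigmaX X) P {ω' | R ω' = 1} ω ∧
      cprob (sigmaX X) P {ω' | R ω' = 1} ω ≤ 1 - ε)
    (hpi : ∀ r ∈ ({0, 1} : Set ℝ), ∀ t ∈ ({0, 1} : Set ℝ), ∀ᵐ ω ∂P,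
      ε ≤ cprob (sigmaX X) (ProbabilityTheory.cond P {ω' | R ω' = r}) {ω' | T ω' = t} ω ∧
      cprob (sigmaX X) (ProbabilityTheory.cond P {ω' | R ω' = r}) {ω' | T ω' = t} ω ≤ 1 - ε)
    (hA1 : IndepFun T (fun ω => (Y₁ ω, Y₀ ω, X ω)) (ProbabilityTheory.cond P {ω | R ω = 1}))
    (hA3 : CondIndepFunGiven (sigmaX X) R (fun ω => (Y₁ ω, Y₀ ω)) P)
    :
    ∀ t ∈ ({0, 1} : Set ℝ),
      ((∫ ω', Yt t ω' ∂P) = ∫ ω, R ω * (if T ω = t then (1 : ℝ) else 0) * Y ω / (cprob (sigmaX X) P {ω' | R ω' = 1} ω * ((ProbabilityTheory.cond P {ω' | R ω' = 1}) {ω' | T ω' = t}).toReal) ∂P) ∧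
      ((∫ ω', Yt t ω' ∂P) = ∫ ω, cexp (sigmaX X) (ProbabilityTheory.cond P {ω' | R ω' = 1}) (Yt t) ω ∂P) ∧
      (cexp (sigmaX X) (ProbabilityTheory.cond P {ω' | R ω' = 1}) (Yt t)
        =ᵐ[P] cexp (sigmaX X)
          (ProbabilityTheory.cond P ({ω' | T ω' = t} ∩ {ω' | R ω' = 1})) Y) := by
  intro t ht
  have hV : Measurable (fun ω => (Y₁ ω, Y₀ ω)) := hY₁m.prodMk hY₀m
  have hA1' : IndepFun T (fun ω => ((Y₁ ω, Y₀ ω), X ω)) (P[|{ω | R ω = 1}]) := by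
    have hg : Measurable (fun p : ℝ × ℝ × 𝒳 => ((p.1, p.2.1), p.2.2)) :=
      (measurable_fst.prodMk (measurable_fst.comp measurable_snd)).prodMk
        (measurable_snd.comp measurable_snd)
    exact hA1.comp measurable_id hg
  simp only [Set.mem_insert_iff, Set.mem_singleton_iff] at ht
  rcases ht with rfl | rfl
  · rw [hYt0]
    exact master P X R T (fun ω => (Y₁ ω, Y₀ ω)) Y₀ Y 0 hX hR hT hV
      (fun p => p.2) measurable_snd rfl (hY₀2.integrable one_le_two) hRbin
      (fun ω h0 => by rw [hY]; simp [h0])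
      ε hε hlam_pos.ne' hlamX (hpi 1 (by simp) 0 (by simp)) hA1' hA3
  · rw [hYt1]
    exact master P X R T (fun ω => (Y₁ ω, Y₀ ω)) Y₁ Y 1 hX hR hT hV
      (fun p => p.1) measurable_fst rfl (hY₁2.integrable one_le_two) hRbin
      (fun ω h1 => by rw [hY]; simp [h1])
      ε hε hlam_pos.ne' hlamX (hpi 1 (by simp) 1 (by simp)) hA1' hA3
end
end

section
/- Assume (A1) and (A3). Then for each t ∈ {0,1}, the efficient influence function for μ_t under these assumptions has mean zero: E[ R·1{T=t}·Y / (λ₁(X)·π_{t1}) + (1 − R·1{T=t} / (λ₁(X)·π_{t1}))·τ_t(1,X) − μ_t ] = 0. -/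
open MeasureTheory ProbabilityTheory Set

noncomputable section

theorem aux_stmt6
    {Ω 𝒳 : Type*} [MeasurableSpace Ω] [MeasurableSpace 𝒳]
    (P : Measure Ω) [IsProbabilityMeasure P]
    (X : Ω → 𝒳) (R T Y₁ Y₀ Y : Ω → ℝ)
    (hX : Measurable X) (hR : Measurable R) (hT : Measurable T)
    (hY₁m : Measurable Y₁) (hY₀m : Measurable Y₀)
    (hRbin : ∀ ω, R ω = 0 ∨ R ω = 1)
    (t : ℝ) (W : Ω → ℝ) (hWm : Measurable W) (hWi : Integrable W P)
    (ψ : ℝ × ℝ → ℝ) (hψ : Measurable ψ) (hWψ : ∀ ω, W ω = ψ (Y₁ ω, Y₀ ω))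
    (hcons : ∀ ω, R ω * (if T ω = t then (1:ℝ) else 0) * Y ω
      = R ω * (if T ω = t then (1:ℝ) else 0) * W ω)
    (ε : ℝ) (hε : 0 < ε)
    (hlam_pos : 0 < P {ω | R ω = 1})
    (hlamX : ∀ᵐ ω ∂P, ε ≤ cprob (sigmaX X) P {ω' | R ω' = 1} ω ∧
      cprob (sigmaX X) P {ω' | R ω' = 1} ω ≤ 1 - ε)
    (hpit : ∀ᵐ ω ∂P,
      ε ≤ cprob (sigmaX X) (ProbabilityTheory.cond P {ω' | R ω' = 1}) {ω' | T ω' = t} ω)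
    (hA1 : IndepFun T (fun ω => (Y₁ ω, Y₀ ω, X ω)) (ProbabilityTheory.cond P {ω | R ω = 1}))
    (hA3 : CondIndepFunGiven (sigmaX X) R (fun ω => (Y₁ ω, Y₀ ω)) P) :
    ∫ ω, (R ω * (if T ω = t then (1 : ℝ) else 0) * Y ω / (cprob (sigmaX X) P {ω' | R ω' = 1} ω * ((ProbabilityTheory.cond P {ω' | R ω' = 1}) {ω' | T ω' = t}).toReal)
      + (1 - R ω * (if T ω = t then (1 : ℝ) else 0) / (cprob (sigmaX X) P {ω' | R ω' = 1} ω * ((ProbabilityTheory.cond P {ω' | R ω' = 1}) {ω' | T ω' = t}).toReal)) * cexp (sigmaX X) (ProbabilityTheory.cond P {ω' | R ω' = 1}) W ω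
      - (∫ ω', W ω' ∂P)) ∂P = 0 := by
  have hm : sigmaX X ≤ ‹MeasurableSpace Ω› := measurable_iff_comap_le.mp hX
  set s1 : Set Ω := {ω | R ω = 1} with hs1def
  have hs1 : MeasurableSet s1 := by
    have h : s1 = R ⁻¹' {1} := by ext ω; simp [hs1def]
    rw [h]; exact hR (measurableSet_singleton 1)
  set st : Set Ω := {ω | T ω = t} with hstdef
  have hst : MeasurableSet st := by
    have h : st = T ⁻¹' {t} := by ext ω; simp [hstdef]
    rw [h]; exact hT (measurableSet_singleton t)
  set P1 : Measure Ω := ProbabilityTheory.cond P s1 with hP1def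
  haveI hP1prob : IsProbabilityMeasure P1 := cond_isProbabilityMeasure hlam_pos.ne'
  have habs : P1 ≪ P := cond_absolutelyContinuous
  set I1 : Ω → ℝ := Set.indicator s1 (fun _ => (1:ℝ)) with hI1def
  have hI1i : Integrable I1 P := (integrable_const (1:ℝ)).indicator hs1
  set lam : Ω → ℝ := cprob (sigmaX X) P s1 with hlamdef
  have hlam_condexp : lam = P[I1|sigmaX X] := rfl
  set tau : Ω → ℝ := cexp (sigmaX X) P1 W with htaudef
  have htau_condexp : tau = P1[W|sigmaX X] := rfl
  set prT : ℝ := (P1 st).toReal with hprTdef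
  set Z : Ω → ℝ × ℝ := fun ω => (Y₁ ω, Y₀ ω) with hZdef
  have hZ : Measurable Z := by rw [hZdef]; exact hY₁m.prodMk hY₀m
  have hWZ : W = fun ω => ψ (Z ω) := by funext ω; rw [hZdef]; exact hWψ ω
  -- basic a.e. facts about lam
  have hLsm : StronglyMeasurable[sigmaX X] lam := stronglyMeasurable_condExp
  have hLm : Measurable[sigmaX X] lam := hLsm.measurable
  have hLmeas : Measurable lam := hLm.mono hm le_rfl
  have hLlb : ∀ᵐ ω ∂P, ε ≤ lam ω := hlamX.mono fun ω h => h.1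
  have hLnorm : ∀ᵐ ω ∂P, ‖lam ω‖ ≤ 1 := by
    filter_upwards [hlamX] with ω h
    rw [Real.norm_eq_abs, abs_le]
    constructor <;> nlinarith [h.1, h.2]
  have hinvnorm : ∀ᵐ ω ∂P, ‖(lam ω)⁻¹‖ ≤ ε⁻¹ := by
    filter_upwards [hLlb] with ω h
    rw [Real.norm_eq_abs, abs_of_nonneg (inv_nonneg.mpr (le_trans hε.le h))]
    exact inv_anti₀ hε h
  -- pull-out helper
  have HPull : ∀ (μ : Measure Ω) (_ : IsFiniteMeasure μ) (g f : Ω → ℝ),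
      StronglyMeasurable[sigmaX X] g → Integrable (fun ω => g ω * f ω) μ → Integrable f μ →
      μ[fun ω => g ω * f ω|sigmaX X] =ᵐ[μ] fun ω => g ω * (μ[f|sigmaX X]) ω := by
    intro μ hfin g f hg h1 h2
    exact condExp_mul_of_stronglyMeasurable_left hg h1 h2
  -- set-integral characterization of lam
  have LC1 : ∀ s : Set Ω, MeasurableSet[sigmaX X] s →
      ∫ ω in s, lam ω ∂P = (P (s ∩ s1)).toReal := by
    intro s hs
    rw [hlam_condexp, setIntegral_condExp hm hI1i hs, hI1def, setIntegral_indicator hs1]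
    simp [measureReal_def]
  -- ε-domination
  have εle : ∀ s : Set Ω, MeasurableSet[sigmaX X] s →
      ENNReal.ofReal ε * P s ≤ P (s ∩ s1) := by
    intro s hs
    have h1 : ε * (P s).toReal ≤ ∫ ω in s, lam ω ∂P := by
      have h2 : ∫ ω in s, (fun _ => ε) ω ∂P ≤ ∫ ω in s, lam ω ∂P :=
        integral_mono_ae (integrable_const ε) integrable_condExp.integrableOn
          (ae_restrict_of_ae hLlb)
      simpa [mul_comm, measureReal_def] using h2
    rw [LC1 s hs] at h1
    calc ENNReal.ofReal ε * P s = ENNReal.ofReal (ε * (P s).toReal) := by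
          rw [ENNReal.ofReal_mul hε.le, ENNReal.ofReal_toReal (measure_ne_top _ _)]
      _ ≤ ENNReal.ofReal ((P (s ∩ s1)).toReal) := ENNReal.ofReal_le_ofReal h1
      _ = P (s ∩ s1) := ENNReal.ofReal_toReal (measure_ne_top _ _)
  have LTRANS : ∀ g : Ω → ENNReal, Measurable[sigmaX X] g →
      ENNReal.ofReal ε * ∫⁻ ω, g ω ∂P ≤ ∫⁻ ω in s1, g ω ∂P := by
    intro g hg
    have hle : (ENNReal.ofReal ε • P).trim hm ≤ (P.restrict s1).trim hm := by
      refine Measure.le_iff.mpr fun s hs => ?_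
      rw [trim_measurableSet_eq hm hs, trim_measurableSet_eq hm hs, Measure.smul_apply,
        smul_eq_mul, Measure.restrict_apply (hm _ hs)]
      exact εle s hs
    calc ENNReal.ofReal ε * ∫⁻ ω, g ω ∂P = ∫⁻ ω, g ω ∂(ENNReal.ofReal ε • P) := by
          rw [lintegral_smul_measure, smul_eq_mul]
      _ = ∫⁻ ω, g ω ∂((ENNReal.ofReal ε • P).trim hm) := (lintegral_trim hm hg).symm
      _ ≤ ∫⁻ ω, g ω ∂((P.restrict s1).trim hm) := lintegral_mono' hle le_rfl
      _ = ∫⁻ ω in s1, g ω ∂P := lintegral_trim hm hg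
  -- restriction is a multiple of P1
  have hrs : P.restrict s1 = P s1 • P1 := by
    rw [hP1def, ProbabilityTheory.cond, smul_smul,
      ENNReal.mul_inv_cancel hlam_pos.ne' (measure_ne_top _ _), one_smul]
  have hIRS : ∀ f : Ω → ℝ, ∫ ω, Set.indicator s1 f ω ∂P = (P s1).toReal * ∫ ω, f ω ∂P1 := by
    intro f
    rw [integral_indicator hs1]
    show ∫ ω, f ω ∂(P.restrict s1) = _
    rw [hrs, integral_smul_measure, smul_eq_mul]
  -- transfer of integrability from P1 to P
  have ITRANS : ∀ f : Ω → ℝ, StronglyMeasurable[sigmaX X] f → Integrable f P1 →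
      Integrable f P := by
    intro f hf hfi
    have hfae : AEStronglyMeasurable f P := (hf.mono hm).aestronglyMeasurable
    refine ⟨hfae, ?_⟩
    have hg : Measurable[sigmaX X] (fun ω => (‖f ω‖₊ : ENNReal)) :=
      measurable_coe_nnreal_ennreal.comp (measurable_nnnorm.comp hf.measurable)
    have h1 := LTRANS _ hg
    have h2 : ∫⁻ ω in s1, (‖f ω‖₊ : ENNReal) ∂P = P s1 * ∫⁻ ω, ‖f ω‖₊ ∂P1 := by
      show ∫⁻ ω, (‖f ω‖₊ : ENNReal) ∂(P.restrict s1) = _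
      rw [hrs, lintegral_smul_measure, smul_eq_mul]
    rw [h2] at h1
    have hfin : P s1 * ∫⁻ ω, ‖f ω‖₊ ∂P1 ≠ ⊤ :=
      ENNReal.mul_ne_top (measure_ne_top _ _) hfi.2.ne
    show (∫⁻ ω, (‖f ω‖₊ : ENNReal) ∂P) < ⊤
    rw [lt_top_iff_ne_top]
    intro htop
    rw [htop, ENNReal.mul_top (ENNReal.ofReal_pos.mpr hε).ne'] at h1
    exact hfin (top_le_iff.mp h1)
  have hτsm : StronglyMeasurable[sigmaX X] tau := stronglyMeasurable_condExp
  have hτmeas : Measurable tau := hτsm.measurable.mono hm le_rfl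
  have hτi : Integrable tau P := ITRANS tau stronglyMeasurable_condExp integrable_condExp
  -- prT is positive
  have hprTpos : 0 < prT := by
    have h1 : ∀ᵐ ω ∂P1, ε ≤ cprob (sigmaX X) P1 st ω := hpit.filter_mono habs.ae_le
    have h2 : ε ≤ ∫ ω, cprob (sigmaX X) P1 st ω ∂P1 := by
      have h3 : ∫ ω, (fun _ => ε) ω ∂P1 ≤ ∫ ω, cprob (sigmaX X) P1 st ω ∂P1 :=
        integral_mono_ae (integrable_const ε) integrable_condExp h1
      simpa using h3
    have h4 : ∫ ω, cprob (sigmaX X) P1 st ω ∂P1 = prT := by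
      show ∫ ω, (P1[Set.indicator st (fun _ => (1:ℝ))|sigmaX X]) ω ∂P1 = prT
      rw [integral_condExp hm, integral_indicator hst]
      simp [hprTdef, measureReal_def]
    linarith
  have hprTne : prT ≠ 0 := hprTpos.ne'
  -- comap σ-algebras
  have hmtri_le : MeasurableSpace.comap (fun ω => (Y₁ ω, Y₀ ω, X ω)) inferInstance
      ≤ ‹MeasurableSpace Ω› :=
    measurable_iff_comap_le.mp (hY₁m.prodMk (hY₀m.prodMk hX))
  have hm_le_tri : sigmaX X ≤
      MeasurableSpace.comap (fun ω => (Y₁ ω, Y₀ ω, X ω)) inferInstance := by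
    intro s hs
    obtain ⟨v, hv, hveq⟩ := MeasurableSpace.measurableSet_comap.mp hs
    refine MeasurableSpace.measurableSet_comap.mpr ⟨univ ×ˢ univ ×ˢ v,
      (MeasurableSet.univ.prod (MeasurableSet.univ.prod hv)), ?_⟩
    rw [← hveq]; ext ω; simp
  -- independence helper
  set φ : ℝ → ℝ := fun x => if x = t then (1:ℝ) else 0 with hφdef
  have hφmeas : Measurable φ := by
    rw [hφdef]
    exact Measurable.ite measurableSet_eq measurable_const measurable_const
  have hIndep : ∀ h : Ω → ℝ,
      Measurable[MeasurableSpace.comap (fun ω => (Y₁ ω, Y₀ ω, X ω)) inferInstance] h →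
      IndepFun (fun ω => φ (T ω)) h P1 := by
    intro h hh
    rw [indepFun_iff_measure_inter_preimage_eq_mul]
    intro s u hs hu
    obtain ⟨v, hv, hveq⟩ := MeasurableSpace.measurableSet_comap.mp (hh hu)
    have key := (indepFun_iff_measure_inter_preimage_eq_mul.mp hA1) (φ ⁻¹' s) v (hφmeas hs) hv
    have h1 : (fun ω => φ (T ω)) ⁻¹' s = T ⁻¹' (φ ⁻¹' s) := rfl
    rw [h1, ← hveq]
    exact key
  have hφTfun : (fun ω => φ (T ω)) = Set.indicator st (fun _ => (1:ℝ)) := by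
    funext ω; by_cases h : T ω = t <;> simp [hφdef, hstdef, Set.indicator, h]
  have hφT : ∫ ω, φ (T ω) ∂P1 = prT := by
    rw [hφTfun, integral_indicator hst]
    simp [hprTdef, measureReal_def]
  -- main computation for the A-weighted integrals
  have GEQ : ∀ h : Ω → ℝ, Measurable h →
      Measurable[MeasurableSpace.comap (fun ω => (Y₁ ω, Y₀ ω, X ω)) inferInstance] h →
      ∫ ω, R ω * (if T ω = t then (1:ℝ) else 0) * h ω / (lam ω * prT) ∂P
        = ∫ ω, Set.indicator s1 (fun ω' => h ω' / lam ω') ω ∂P := by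
    intro h hh0 hh
    have hLtri : Measurable[MeasurableSpace.comap (fun ω => (Y₁ ω, Y₀ ω, X ω))
        inferInstance] lam := hLm.mono hm_le_tri le_rfl
    have step1 : (fun ω => R ω * (if T ω = t then (1:ℝ) else 0) * h ω / (lam ω * prT))
        = fun ω => Set.indicator s1 (fun ω' => φ (T ω') * (h ω' / (lam ω' * prT))) ω := by
      funext ω
      by_cases hωs : ω ∈ s1
      · have hR1 : R ω = 1 := hωs
        simp only [Set.indicator_of_mem hωs, hR1, hφdef]
        ring
      · have hR0 : R ω = 0 := (hRbin ω).resolve_right hωs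
        simp [Set.indicator_of_notMem hωs, hR0]
    rw [step1, hIRS]
    have step2 : ∫ ω, φ (T ω) * (h ω / (lam ω * prT)) ∂P1
        = prT * ∫ ω, h ω / (lam ω * prT) ∂P1 := by
      rw [(hIndep (fun ω => h ω / (lam ω * prT))
            (hh.div (hLtri.mul measurable_const))).integral_fun_mul_eq_mul_integral
          (hφmeas.comp hT).aestronglyMeasurable
          (hh0.div (hLmeas.mul measurable_const)).aestronglyMeasurable,
        hφT]
    rw [step2]
    have step3 : ∫ ω, h ω / (lam ω * prT) ∂P1 = prT⁻¹ * ∫ ω, h ω / lam ω ∂P1 := by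
      rw [← integral_const_mul]
      congr 1
      funext ω
      rw [div_eq_mul_inv, div_eq_mul_inv, mul_inv]
      ring
    rw [step3, hIRS, ← mul_assoc, ← mul_assoc, mul_assoc _ prT prT⁻¹,
      mul_inv_cancel₀ hprTne, mul_one]
  -- PB3 : the tau-integral
  have PB3 : ∫ ω, Set.indicator s1 (fun ω' => tau ω' / lam ω') ω ∂P = ∫ ω, tau ω ∂P := by
    have hgm : StronglyMeasurable[sigmaX X] (fun ω => tau ω / lam ω) :=
      (hτsm.measurable.div hLm).stronglyMeasurable
    have hkey : (fun ω => Set.indicator s1 (fun ω' => tau ω' / lam ω') ω)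
        = fun ω => (tau ω / lam ω) * I1 ω := by
      funext ω
      by_cases hωs : ω ∈ s1 <;> simp [Set.indicator, hωs, hI1def]
    have hint : Integrable (fun ω => (tau ω / lam ω) * I1 ω) P := by
      refine Integrable.mono' (hτi.norm.const_mul ε⁻¹)
        (((hτmeas.div hLmeas).mul (measurable_const.indicator hs1)).aestronglyMeasurable) ?_
      filter_upwards [hinvnorm] with ω hω
      rw [norm_inv] at hω
      have hI : ‖I1 ω‖ ≤ 1 := by
        by_cases h : ω ∈ s1 <;> simp [hI1def, Set.indicator, h]
      rw [norm_mul, div_eq_mul_inv, norm_mul, norm_inv]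
      have h1 := norm_nonneg (tau ω)
      have h3 : (0:ℝ) ≤ ‖lam ω‖⁻¹ := inv_nonneg.mpr (norm_nonneg _)
      have k1 : ‖tau ω‖ * ‖lam ω‖⁻¹ * ‖I1 ω‖ ≤ ‖tau ω‖ * ‖lam ω‖⁻¹ :=
        mul_le_of_le_one_right (mul_nonneg h1 h3) hI
      have k2 : ‖tau ω‖ * ‖lam ω‖⁻¹ ≤ ‖tau ω‖ * ε⁻¹ :=
        mul_le_mul_of_nonneg_left hω h1
      calc ‖tau ω‖ * ‖lam ω‖⁻¹ * ‖I1 ω‖ ≤ ‖tau ω‖ * ε⁻¹ := le_trans k1 k2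
        _ = ε⁻¹ * ‖tau ω‖ := mul_comm _ _
    rw [hkey, ← integral_condExp hm (f := fun ω => (tau ω / lam ω) * I1 ω)]
    rw [integral_congr_ae (HPull P inferInstance (fun ω => tau ω / lam ω) I1 hgm hint hI1i)]
    rw [← hlam_condexp]
    refine integral_congr_ae ?_
    filter_upwards [hLlb] with ω hω
    rw [div_mul_cancel₀ _ (ne_of_gt (lt_of_lt_of_le hε hω))]
  -- CORE : the conditional-independence-based set-integral identity
  have CORE : ∀ s : Set Ω, MeasurableSet[sigmaX X] s →
      ∫ ω in s, lam ω * W ω ∂P = ∫ ω in s, Set.indicator s1 W ω ∂P := by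
    intro s hs
    have hs0 : MeasurableSet s := hm _ hs
    have star : ∀ u : Set (ℝ × ℝ), MeasurableSet u →
        (P (Z ⁻¹' u ∩ (s ∩ s1))).toReal = ∫ ω in Z ⁻¹' u ∩ s, lam ω ∂P := by
      intro u hu
      have hZu : MeasurableSet (Z ⁻¹' u) := hZ hu
      have hJint : Integrable (Set.indicator (s1 ∩ Z ⁻¹' u) (fun _ => (1:ℝ))) P :=
        (integrable_const 1).indicator (hs1.inter hZu)
      have hJint0 : Integrable (Set.indicator (Z ⁻¹' u) (fun _ => (1:ℝ))) P :=
        (integrable_const 1).indicator hZu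
      have c2 := hA3 {1} u (measurableSet_singleton 1) hu
      have hpre : R ⁻¹' {1} = s1 := by ext ω; simp [hs1def]
      rw [hpre] at c2
      have hJint2 : Integrable (fun ω => lam ω * Set.indicator (Z ⁻¹' u) (fun _ => (1:ℝ)) ω) P :=
        hJint0.bdd_mul hLmeas.aestronglyMeasurable hLnorm
      have c2' : (P[Set.indicator (s1 ∩ Z ⁻¹' u) (fun _ => (1:ℝ))|sigmaX X]) =ᵐ[P]
          fun ω => lam ω * (P[Set.indicator (Z ⁻¹' u) (fun _ => (1:ℝ))|sigmaX X]) ω := c2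
      calc (P (Z ⁻¹' u ∩ (s ∩ s1))).toReal
          = ∫ ω in s, Set.indicator (s1 ∩ Z ⁻¹' u) (fun _ => (1:ℝ)) ω ∂P := by
            rw [setIntegral_indicator (hs1.inter hZu), setIntegral_const, smul_eq_mul, mul_one]
            congr 2
            ext ω
            simp only [Set.mem_inter_iff]
            tauto
        _ = ∫ ω in s, (P[Set.indicator (s1 ∩ Z ⁻¹' u) (fun _ => (1:ℝ))|sigmaX X]) ω ∂P :=
            (setIntegral_condExp hm hJint hs).symm
        _ = ∫ ω in s, lam ω * (P[Set.indicator (Z ⁻¹' u) (fun _ => (1:ℝ))|sigmaX X]) ω ∂P :=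
            integral_congr_ae (ae_restrict_of_ae c2')
        _ = ∫ ω in s, (P[fun ω => lam ω * Set.indicator (Z ⁻¹' u) (fun _ => (1:ℝ)) ω|sigmaX X]) ω ∂P :=
            integral_congr_ae (ae_restrict_of_ae
              (HPull P inferInstance lam _ hLsm hJint2 hJint0).symm)
        _ = ∫ ω in s, lam ω * Set.indicator (Z ⁻¹' u) (fun _ => (1:ℝ)) ω ∂P :=
            setIntegral_condExp hm hJint2 hs
        _ = ∫ ω in s, Set.indicator (Z ⁻¹' u) lam ω ∂P := by
            refine integral_congr_ae (ae_of_all _ fun ω => ?_)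
            by_cases h : ω ∈ Z ⁻¹' u <;> simp [Set.indicator, h]
        _ = ∫ ω in s ∩ Z ⁻¹' u, lam ω ∂P := setIntegral_indicator hZu
        _ = ∫ ω in Z ⁻¹' u ∩ s, lam ω ∂P := by rw [Set.inter_comm]
    have hν : Measure.map Z ((P.restrict s).withDensity (fun ω => ENNReal.ofReal (lam ω)))
        = Measure.map Z (P.restrict (s ∩ s1)) := by
      refine Measure.ext fun u hu => ?_
      rw [Measure.map_apply hZ hu, Measure.map_apply hZ hu,
        withDensity_apply _ (hZ hu), Measure.restrict_restrict (hZ hu),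
        Measure.restrict_apply (hZ hu)]
      have h1 : ∫⁻ ω in Z ⁻¹' u ∩ s, ENNReal.ofReal (lam ω) ∂P
          = ENNReal.ofReal (∫ ω in Z ⁻¹' u ∩ s, lam ω ∂P) :=
        (ofReal_integral_eq_lintegral_ofReal integrable_condExp.integrableOn
          (ae_restrict_of_ae (hLlb.mono fun ω h => le_trans hε.le h))).symm
      rw [h1, ← star u hu, ENNReal.ofReal_toReal (measure_ne_top _ _)]
    calc ∫ ω in s, lam ω * W ω ∂P
        = ∫ ω, (Real.toNNReal (lam ω)) • W ω ∂(P.restrict s) := by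
          refine integral_congr_ae (ae_restrict_of_ae ?_)
          filter_upwards [hLlb] with ω h
          rw [NNReal.smul_def, Real.coe_toNNReal _ (le_trans hε.le h), smul_eq_mul]
      _ = ∫ ω, W ω ∂((P.restrict s).withDensity (fun ω => ((Real.toNNReal (lam ω) : NNReal) : ENNReal))) :=
          (integral_withDensity_eq_integral_smul (measurable_real_toNNReal.comp hLmeas) W).symm
      _ = ∫ ω, ψ (Z ω) ∂((P.restrict s).withDensity (fun ω => ENNReal.ofReal (lam ω))) := by
          rw [← hWZ]; rfl
      _ = ∫ p, ψ p ∂(Measure.map Z ((P.restrict s).withDensity (fun ω => ENNReal.ofReal (lam ω)))) :=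
          (integral_map hZ.aemeasurable hψ.aestronglyMeasurable).symm
      _ = ∫ p, ψ p ∂(Measure.map Z (P.restrict (s ∩ s1))) := by rw [hν]
      _ = ∫ ω, ψ (Z ω) ∂(P.restrict (s ∩ s1)) := integral_map hZ.aemeasurable hψ.aestronglyMeasurable
      _ = ∫ ω in s ∩ s1, W ω ∂P := by rw [← hWZ]
      _ = ∫ ω in s, Set.indicator s1 W ω ∂P := (setIntegral_indicator hs1).symm
  -- S2 : the conditional expectation factorization
  have hLW_int : Integrable (fun ω => lam ω * W ω) P :=
    hWi.bdd_mul hLmeas.aestronglyMeasurable hLnorm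
  have hS2 : P[Set.indicator s1 W|sigmaX X] =ᵐ[P] fun ω => lam ω * (P[W|sigmaX X]) ω := by
    refine (ae_eq_condExp_of_forall_setIntegral_eq hm (hWi.indicator hs1)
      (fun s _ _ => (Integrable.bdd_mul integrable_condExp
        hLmeas.aestronglyMeasurable hLnorm).integrableOn)
      (fun s hs _ => ?_) ?_).symm
    · calc ∫ ω in s, lam ω * (P[W|sigmaX X]) ω ∂P
          = ∫ ω in s, (P[fun ω => lam ω * W ω|sigmaX X]) ω ∂P :=
            integral_congr_ae (ae_restrict_of_ae
              (HPull P inferInstance lam W hLsm hLW_int hWi).symm)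
        _ = ∫ ω in s, lam ω * W ω ∂P := setIntegral_condExp hm hLW_int hs
        _ = ∫ ω in s, Set.indicator s1 W ω ∂P := CORE s hs
    · exact StronglyMeasurable.aestronglyMeasurable
        (hLsm.mul stronglyMeasurable_condExp)
  -- PB4 : the W-integral
  have PB4 : ∫ ω, Set.indicator s1 (fun ω' => W ω' / lam ω') ω ∂P = ∫ ω, W ω ∂P := by
    have husm : StronglyMeasurable[sigmaX X] (fun ω => (lam ω)⁻¹) :=
      hLm.inv.stronglyMeasurable
    have hvi : Integrable (Set.indicator s1 W) P := hWi.indicator hs1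
    have hkey : (fun ω => Set.indicator s1 (fun ω' => W ω' / lam ω') ω)
        = fun ω => (lam ω)⁻¹ * Set.indicator s1 W ω := by
      funext ω
      by_cases hωs : ω ∈ s1 <;> simp [Set.indicator, hωs, div_eq_inv_mul]
    have huv : Integrable (fun ω => (lam ω)⁻¹ * Set.indicator s1 W ω) P :=
      hvi.bdd_mul hLmeas.inv.aestronglyMeasurable hinvnorm
    rw [hkey, ← integral_condExp hm (f := fun ω => (lam ω)⁻¹ * Set.indicator s1 W ω),
      integral_congr_ae (HPull P inferInstance (fun ω => (lam ω)⁻¹)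
        (Set.indicator s1 W) husm huv hvi)]
    have e2 : ∫ ω, (lam ω)⁻¹ * (P[Set.indicator s1 W|sigmaX X]) ω ∂P
        = ∫ ω, (P[W|sigmaX X]) ω ∂P := by
      refine integral_congr_ae ?_
      filter_upwards [hS2, hLlb] with ω h1 h2
      rw [h1, ← mul_assoc, inv_mul_cancel₀ (ne_of_gt (lt_of_lt_of_le hε h2)), one_mul]
    rw [e2, integral_condExp hm]
  -- integrability of the two A-weighted terms
  have HF : ∀ f : Ω → ℝ, Integrable f P → Measurable f →
      Integrable (fun ω => R ω * (if T ω = t then (1:ℝ) else 0) * f ω / (lam ω * prT)) P := by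
    intro f hfi hfm
    have hAm : Measurable (fun ω => R ω * (if T ω = t then (1:ℝ) else 0)) :=
      hR.mul (hφmeas.comp hT)
    refine Integrable.mono' (hfi.norm.const_mul ((ε * prT)⁻¹))
      (((hAm.mul hfm).div (hLmeas.mul measurable_const)).aestronglyMeasurable) ?_
    filter_upwards [hLlb] with ω hω
    have hA1' : ‖R ω * (if T ω = t then (1:ℝ) else 0)‖ ≤ 1 := by
      rcases hRbin ω with h | h <;> by_cases ht' : T ω = t <;> simp [h, ht']
    have hLπ : ε * prT ≤ ‖lam ω * prT‖ := by
      rw [Real.norm_eq_abs, abs_of_pos (by nlinarith)]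
      nlinarith
    rw [norm_div]
    calc ‖R ω * (if T ω = t then (1:ℝ) else 0) * f ω‖ / ‖lam ω * prT‖
        ≤ (1 * ‖f ω‖) / (ε * prT) := by
          apply div_le_div₀ (by positivity) _ (by positivity) hLπ
          rw [norm_mul]
          exact mul_le_mul_of_nonneg_right hA1' (norm_nonneg _)
      _ = (ε * prT)⁻¹ * ‖f ω‖ := by ring
  have hF1i := HF W hWi hWm
  have hF2i := HF tau hτi hτmeas
  -- measurability of W w.r.t. the triple σ-algebra
  have hWtri : Measurable[MeasurableSpace.comap (fun ω => (Y₁ ω, Y₀ ω, X ω)) inferInstance] W := by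
    rw [hWZ, hZdef]
    exact (hψ.comp (measurable_fst.prodMk (measurable_fst.comp measurable_snd))).comp
      (comap_measurable _)
  have hGW := GEQ W hWm hWtri
  have hGτ := GEQ tau hτmeas (hτsm.measurable.mono hm_le_tri le_rfl)
  -- final assembly
  have hsplit : (fun ω => R ω * (if T ω = t then (1:ℝ) else 0) * Y ω / (lam ω * prT)
        + (1 - R ω * (if T ω = t then (1:ℝ) else 0) / (lam ω * prT)) * tau ω
        - (∫ ω', W ω' ∂P))
      = fun ω => (R ω * (if T ω = t then (1:ℝ) else 0) * W ω / (lam ω * prT)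
        + (tau ω - R ω * (if T ω = t then (1:ℝ) else 0) * tau ω / (lam ω * prT)))
        - (∫ ω', W ω' ∂P) := by
    funext ω
    rw [hcons ω]
    ring
  have hInt2 : Integrable (fun ω => tau ω
      - R ω * (if T ω = t then (1:ℝ) else 0) * tau ω / (lam ω * prT)) P := hτi.sub hF2i
  have hInt1 : Integrable (fun ω => R ω * (if T ω = t then (1:ℝ) else 0) * W ω / (lam ω * prT)
      + (tau ω - R ω * (if T ω = t then (1:ℝ) else 0) * tau ω / (lam ω * prT))) P :=
    hF1i.add hInt2
  rw [hsplit, integral_sub hInt1 (integrable_const _),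
    integral_add hF1i hInt2, integral_sub hτi hF2i, integral_const]
  rw [hGW, PB4, hGτ, PB3]
  simp

theorem stmt6
    {Ω 𝒳 : Type*} [MeasurableSpace Ω] [MeasurableSpace 𝒳] [StandardBorelSpace 𝒳]
    (P : Measure Ω) [IsProbabilityMeasure P]
    (X : Ω → 𝒳) (R T Y₁ Y₀ Y : Ω → ℝ) (Yt : ℝ → Ω → ℝ)
    (hX : Measurable X) (hR : Measurable R) (hT : Measurable T)
    (hY₁m : Measurable Y₁) (hY₀m : Measurable Y₀)
    (hRbin : ∀ ω, R ω = 0 ∨ R ω = 1) (hTbin : ∀ ω, T ω = 0 ∨ T ω = 1)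
    (hY₁2 : MemLp Y₁ 2 P) (hY₀2 : MemLp Y₀ 2 P)
    (hY : Y = fun ω => T ω * Y₁ ω + (1 - T ω) * Y₀ ω)
    (hYt1 : Yt 1 = Y₁) (hYt0 : Yt 0 = Y₀)
    (ε : ℝ) (hε : 0 < ε)
    (hlam_pos : 0 < P {ω | R ω = 1}) (hlam_lt : P {ω | R ω = 1} < 1)
    (hlamX : ∀ᵐ ω ∂P, ε ≤ cprob (sigmaX X) P {ω' | R ω' = 1} ω ∧
      cprob (sigmaX X) P {ω' | R ω' = 1} ω ≤ 1 - ε)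
    (hpi : ∀ r ∈ ({0, 1} : Set ℝ), ∀ t ∈ ({0, 1} : Set ℝ), ∀ᵐ ω ∂P,
      ε ≤ cprob (sigmaX X) (ProbabilityTheory.cond P {ω' | R ω' = r}) {ω' | T ω' = t} ω ∧
      cprob (sigmaX X) (ProbabilityTheory.cond P {ω' | R ω' = r}) {ω' | T ω' = t} ω ≤ 1 - ε)
    (hA1 : IndepFun T (fun ω => (Y₁ ω, Y₀ ω, X ω)) (ProbabilityTheory.cond P {ω | R ω = 1}))
    (hA3 : CondIndepFunGiven (sigmaX X) R (fun ω => (Y₁ ω, Y₀ ω)) P)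
    :
    ∀ t ∈ ({0, 1} : Set ℝ),
      ∫ ω, (R ω * (if T ω = t then (1 : ℝ) else 0) * Y ω / (cprob (sigmaX X) P {ω' | R ω' = 1} ω * ((ProbabilityTheory.cond P {ω' | R ω' = 1}) {ω' | T ω' = t}).toReal)
        + (1 - R ω * (if T ω = t then (1 : ℝ) else 0) / (cprob (sigmaX X) P {ω' | R ω' = 1} ω * ((ProbabilityTheory.cond P {ω' | R ω' = 1}) {ω' | T ω' = t}).toReal)) * cexp (sigmaX X) (ProbabilityTheory.cond P {ω' | R ω' = 1}) (Yt t) ω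
        - (∫ ω', Yt t ω' ∂P)) ∂P = 0 := by
  intro t ht
  have hpit := (hpi 1 (by simp) t ht).mono (fun ω h => h.1)
  rcases ht with ht | ht
  · subst ht
    rw [hYt0]
    refine aux_stmt6 P X R T Y₁ Y₀ Y hX hR hT hY₁m hY₀m hRbin 0 Y₀ hY₀m
      (hY₀2.integrable one_le_two) Prod.snd measurable_snd (fun ω => rfl) ?_ ε hε hlam_pos
      hlamX hpit hA1 hA3
    intro ω
    by_cases h : T ω = 0
    · simp [hY, h]
    · simp [h]
  · simp only [Set.mem_singleton_iff] at ht
    subst ht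
    rw [hYt1]
    refine aux_stmt6 P X R T Y₁ Y₀ Y hX hR hT hY₁m hY₀m hRbin 1 Y₁ hY₁m
      (hY₁2.integrable one_le_two) Prod.fst measurable_fst (fun ω => rfl) ?_ ε hε hlam_pos
      hlamX hpit hA1 hA3
    intro ω
    by_cases h : T ω = 1
    · simp [hY, h]
    · simp [h]
end
end
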